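/- arXiv:1510.03817 — 5 statements merged into one kernel-verified Lean document; each statement's English description precedes it below -/
import Mathlib

section
/- (Optimal exponent under the Morse–Bott/Lyapunov–Schmidt condition.) In Setting (B), with K, Π, Φ as above, suppose there are open neighborhoods U₀ ⊆ U of x∞ and V₀ ⊆ X̃ of 0 and a C¹ map Ψ : V₀ → U₀ with Φ(Ψ(α)) = α for all α ∈ V₀ and Ψ(Φ(x)) = x for all x ∈ U₀, such that the Lyapunov–Schmidt reduction α ↦ E(Ψ(α)) is constant, equal to E(x∞), on a neighborhood of 0 in K ∩ V₀ (this is the condition satisfied when E is Morse–Bott at x∞). Then there exist an open neighborhood W₀ ⊆ U of x∞ and a constant C ∈ [1,∞) such that |E(x) − E(x∞)| ≤ C · ‖M(x)‖²_{X̃} for all x ∈ W₀; that is, the Łojasiewicz–Simon gradient inequality holds with the optimal exponent θ = 1/2. -/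
open Function Set

set_option maxHeartbeats 1000000

noncomputable section

/-- A continuous linear operator between real normed spaces is Fredholm of index zero. -/
def FredholmIndexZero {X Y : Type*} [NormedAddCommGroup X] [NormedSpace ℝ X]
    [NormedAddCommGroup Y] [NormedSpace ℝ Y] (T : X →L[ℝ] Y) : Prop :=
  FiniteDimensional ℝ (LinearMap.ker (T : X →ₗ[ℝ] Y)) ∧
    IsClosed (LinearMap.range (T : X →ₗ[ℝ] Y) : Set Y) ∧
    FiniteDimensional ℝ (Y ⧸ LinearMap.range (T : X →ₗ[ℝ] Y)) ∧
    Module.finrank ℝ (LinearMap.ker (T : X →ₗ[ℝ] Y)) = Module.finrank ℝ (Y ⧸ LinearMap.range (T : X →ₗ[ℝ] Y))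

/-- Optimal exponent θ = 1/2 under the Morse–Bott/Lyapunov–Schmidt condition (Setting (B)):
if the Lyapunov–Schmidt reduction `α ↦ E (Ψ α)` is constant, equal to `E x_inf`, on a
neighborhood of `0` in `K ∩ V₀`, then `|E x - E x_inf| ≤ C ‖M x‖²` near `x_inf`. -/
theorem optimal_lojasiewicz_simon_morse_bott
    {X Xt : Type*} [NormedAddCommGroup X] [NormedSpace ℝ X] [CompleteSpace X]
    [NormedAddCommGroup Xt] [NormedSpace ℝ Xt] [CompleteSpace Xt]
    -- Setting (B)
    (ε : X →L[ℝ] Xt) (hε : Function.Injective ε)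
    (ζ : Xt →L[ℝ] StrongDual ℝ X) (hζ : Function.Injective ζ)
    (hdef : ∀ x : X, x ≠ 0 → ζ (ε x) x ≠ 0)
    (U : Set X) (hU : IsOpen U)
    (E : X → ℝ) (hE : ContDiffOn ℝ 2 E U)
    (M : X → Xt) (hMC1 : ContDiffOn ℝ 1 M U)
    (hgrad : ∀ x ∈ U, ∀ v : X, fderiv ℝ E x v = ζ (M x) v)
    (x_inf : X) (hx : x_inf ∈ U) (hMcrit : M x_inf = 0)
    (hFred : FredholmIndexZero (fderiv ℝ M x_inf))
    -- K = ker M'(x_inf); Π : X* → X* a continuous projection with range j(K),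
    -- inducing Pt : X̃ → X (composition with ε gives the induced projections on X and X̃).
    (Pd : StrongDual ℝ X →L[ℝ] StrongDual ℝ X)
    (hPd_idem : Pd.comp Pd = Pd)
    (hPd_range : LinearMap.range (Pd : StrongDual ℝ X →ₗ[ℝ] StrongDual ℝ X)
      = Submodule.map (ζ.comp ε : X →ₗ[ℝ] StrongDual ℝ X) (LinearMap.ker (fderiv ℝ M x_inf : X →ₗ[ℝ] Xt)))
    (Pt : Xt →L[ℝ] X)
    (hPt_mem : ∀ y : Xt, Pt y ∈ LinearMap.ker (fderiv ℝ M x_inf : X →ₗ[ℝ] Xt))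
    (hPt_compat : ∀ y : Xt, ζ (ε (Pt y)) = Pd (ζ y))
    -- local C¹ inverse Ψ of Φ, Φ x = M x + Π (x - x_inf)
    (U₀ : Set X) (hU₀ : IsOpen U₀) (hxU₀ : x_inf ∈ U₀) (hU₀U : U₀ ⊆ U)
    (V₀ : Set Xt) (hV₀ : IsOpen V₀) (h0V₀ : (0 : Xt) ∈ V₀)
    (Ψ : Xt → X) (hΨC1 : ContDiffOn ℝ 1 Ψ V₀) (hΨmap : MapsTo Ψ V₀ U₀)
    (hΦΨ : ∀ α ∈ V₀, M (Ψ α) + ε (Pt (ε (Ψ α - x_inf))) = α)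
    (hΨΦ : ∀ x ∈ U₀, Ψ (M x + ε (Pt (ε (x - x_inf)))) = x)
    -- the Lyapunov–Schmidt reduction is constant on a neighborhood of 0 in K ∩ V₀
    (W : Set Xt) (hW : IsOpen W) (h0W : (0 : Xt) ∈ W)
    (hconst : ∀ α ∈ W ∩ V₀,
      (∃ k ∈ LinearMap.ker (fderiv ℝ M x_inf : X →ₗ[ℝ] Xt), ε k = α) → E (Ψ α) = E x_inf) :
    ∃ (W₀ : Set X) (C : ℝ), IsOpen W₀ ∧ x_inf ∈ W₀ ∧ W₀ ⊆ U ∧ 1 ≤ C ∧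
      ∀ x ∈ W₀, |E x - E x_inf| ≤ C * ‖M x‖ ^ 2 := by
  classical
  set A : X →L[ℝ] Xt := fderiv ℝ M x_inf with hA
  set Kk : Submodule ℝ X := LinearMap.ker (A : X →ₗ[ℝ] Xt) with hKk
  haveI : FiniteDimensional ℝ Kk := hFred.1
  set Q : Xt →L[ℝ] Xt := ε.comp Pt with hQdef
  have hQapp : ∀ z : Xt, Q z = ε (Pt z) := fun z => rfl
  -- Pt is a left inverse of ε on Kk
  have hPtε : ∀ k ∈ Kk, Pt (ε k) = k := by
    intro k hk
    apply hε; apply hζ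
    rw [hPt_compat]
    have hmem : ζ (ε k) ∈ LinearMap.range (Pd : StrongDual ℝ X →ₗ[ℝ] StrongDual ℝ X) := by
      rw [hPd_range]
      exact Submodule.mem_map.mpr ⟨k, hk, rfl⟩
    obtain ⟨w, hw⟩ := hmem
    change Pd w = ζ (ε k) at hw
    calc Pd (ζ (ε k)) = Pd (Pd w) := by rw [hw]
      _ = (Pd.comp Pd) w := rfl
      _ = Pd w := by rw [hPd_idem]
      _ = ζ (ε k) := hw
  have hΨ0 : Ψ 0 = x_inf := by
    have h := hΨΦ x_inf hxU₀
    simpa [hMcrit] using h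
  -- differentiability helpers
  have hEdiff : ∀ y ∈ U, DifferentiableAt ℝ E y := fun y hy =>
    (hE.differentiableOn two_ne_zero).differentiableAt (hU.mem_nhds hy)
  have hMdiff : ∀ y ∈ U, DifferentiableAt ℝ M y := fun y hy =>
    (hMC1.differentiableOn one_ne_zero).differentiableAt (hU.mem_nhds hy)
  have hΨdiff : ∀ β ∈ V₀, DifferentiableAt ℝ Ψ β := fun β hβ =>
    (hΨC1.differentiableOn one_ne_zero).differentiableAt (hV₀.mem_nhds hβ)
  have hΨU : ∀ β ∈ V₀, Ψ β ∈ U := fun β hβ => hU₀U (hΨmap hβ)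
  have hgradE : ∀ y ∈ U, fderiv ℝ E y = ζ (M y) :=
    fun y hy => ContinuousLinearMap.ext (hgrad y hy)
  have hFform : ∀ β ∈ V₀, M (Ψ β) = β - Q (ε (Ψ β - x_inf)) := by
    intro β hβ
    rw [hQapp]
    exact eq_sub_of_add_eq (hΦΨ β hβ)
  have hgdiff : ∀ β ∈ V₀, DifferentiableAt ℝ (E ∘ Ψ) β := fun β hβ =>
    (hEdiff _ (hΨU _ hβ)).comp β (hΨdiff _ hβ)
  have hfg : ∀ β ∈ V₀, fderiv ℝ (E ∘ Ψ) β = (ζ (M (Ψ β))).comp (fderiv ℝ Ψ β) := by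
    intro β hβ
    rw [fderiv_comp β (hEdiff _ (hΨU _ hβ)) (hΨdiff _ hβ), hgradE _ (hΨU _ hβ)]
  -- derivative of Ψ at 0 on ε(Kk)
  set T : X →L[ℝ] Xt := (ε.comp Pt).comp ε with hT
  have hΦx0 : M x_inf + ε (Pt (ε (x_inf - x_inf))) = 0 := by simp [hMcrit]
  have hDΦ : HasFDerivAt (fun x => M x + ε (Pt (ε (x - x_inf)))) (A + T) x_inf := by
    have h1 : HasFDerivAt (fun x => M x + (T x - T x_inf)) (A + T) x_inf :=
      (hMdiff x_inf hx).hasFDerivAt.add ((T.hasFDerivAt).sub_const (T x_inf))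
    apply h1.congr_of_eventuallyEq
    filter_upwards with x
    simp [hT, map_sub]
  have hDΨ0ε : ∀ m ∈ Kk, fderiv ℝ Ψ 0 (ε m) = m := by
    intro m hm
    have hev : (fun x => Ψ (M x + ε (Pt (ε (x - x_inf))))) =ᶠ[nhds x_inf] id :=
      Filter.eventuallyEq_of_mem (hU₀.mem_nhds hxU₀) hΨΦ
    have hid : fderiv ℝ (fun x => Ψ (M x + ε (Pt (ε (x - x_inf))))) x_inf
        = ContinuousLinearMap.id ℝ X := by
      rw [hev.fderiv_eq, fderiv_id]
    have hdΨ0 : DifferentiableAt ℝ Ψ (M x_inf + ε (Pt (ε (x_inf - x_inf)))) := by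
      rw [hΦx0]; exact hΨdiff 0 h0V₀
    have hcomp := fderiv_comp (𝕜 := ℝ) x_inf hdΨ0 hDΦ.differentiableAt
    rw [hDΦ.fderiv, hΦx0] at hcomp
    have hc2 : (fderiv ℝ Ψ 0).comp (A + T) m = m := by
      rw [← hcomp]
      have : (fun x => Ψ (M x + ε (Pt (ε (x - x_inf))))) = Ψ ∘ (fun x => M x + ε (Pt (ε (x - x_inf)))) := rfl
      rw [← this, hid]; rfl
    have hAm : A m = 0 := hm
    have hTm : T m = ε m := by
      have h := hPtε m hm
      simp [hT, ContinuousLinearMap.comp_apply, h]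
    rwa [ContinuousLinearMap.comp_apply, ContinuousLinearMap.add_apply, hAm, hTm, zero_add] at hc2
  have hDΨcont : ContinuousOn (fderiv ℝ Ψ) V₀ :=
    hΨC1.continuousOn_fderiv_of_isOpen hV₀ le_rfl
  -- vanishing of derivative of E ∘ Ψ along K directions, at K points
  have hvanish : ∀ r : ℝ, Metric.ball (0:Xt) r ⊆ W ∩ V₀ → ∀ k ∈ Kk, ε k ∈ Metric.ball (0:Xt) r →
      ∀ m' ∈ Kk, ζ (M (Ψ (ε k))) (fderiv ℝ Ψ (ε k) (ε m')) = 0 := by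
    intro r hball k hk hkball m' hm'
    have hkV : ε k ∈ V₀ := (hball hkball).2
    have hrk : ‖ε k‖ < r := by simpa [Metric.mem_ball, dist_zero_right] using hkball
    have hline : HasDerivAt (fun t : ℝ => (E ∘ Ψ) (ε k + t • ε m'))
        (fderiv ℝ (E ∘ Ψ) (ε k) (ε m')) 0 := by
      have h2 : HasDerivAt (fun t : ℝ => ε k + t • ε m') (ε m') 0 := by
        simpa using ((hasDerivAt_id (0:ℝ)).smul_const (ε m')).const_add (ε k)
      have h4 : HasFDerivAt (E ∘ Ψ) (fderiv ℝ (E ∘ Ψ) (ε k)) (ε k + (0:ℝ) • ε m') := by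
        simpa using (hgdiff _ hkV).hasFDerivAt
      exact h4.comp_hasDerivAt 0 h2
    have hconst' : (fun t : ℝ => (E ∘ Ψ) (ε k + t • ε m')) =ᶠ[nhds (0:ℝ)] (fun _ => E x_inf) := by
      have hcont : Continuous (fun t : ℝ => ε k + t • ε m') :=
        continuous_const.add (continuous_id.smul continuous_const)
      have h0m : (ε k + (0:ℝ) • ε m') ∈ Metric.ball (0:Xt) r := by simpa using hkball
      have hmem : (fun t : ℝ => ε k + t • ε m') ⁻¹' (Metric.ball (0:Xt) r) ∈ nhds (0:ℝ) :=
        (hcont.continuousAt (x := (0:ℝ))).preimage_mem_nhds (Metric.isOpen_ball.mem_nhds h0m)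
      filter_upwards [hmem] with t ht
      have heq : ε k + t • ε m' = ε (k + t • m') := by simp
      exact hconst _ (hball ht) ⟨k + t • m', Kk.add_mem hk (Kk.smul_mem t hm'), heq.symm⟩
    have hd0 : fderiv ℝ (E ∘ Ψ) (ε k) (ε m') = 0 := by
      rw [← hline.deriv, hconst'.deriv_eq, deriv_const]
    rw [hfg _ hkV] at hd0
    exact hd0
  -- positive lower bound for the definite form on the unit sphere of Kk
  obtain ⟨c, hcpos, hcmin⟩ : ∃ c > 0, ∀ m : X, m ∈ Kk → ‖m‖ = 1 → c ≤ |ζ (ε m) m| := by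
    by_cases htriv : ∀ m ∈ Kk, m = (0:X)
    · refine ⟨1, one_pos, fun m hm hnorm => absurd hnorm ?_⟩
      rw [htriv m hm]; simp
    · push_neg at htriv
      obtain ⟨m₀, hm₀K, hm₀⟩ := htriv
      haveI : Nontrivial Kk := ⟨⟨⟨m₀, hm₀K⟩, 0, by simp [hm₀]⟩⟩
      have hcomp : IsCompact (Metric.sphere (0:Kk) 1) := isCompact_sphere _ _
      have hne : (Metric.sphere (0:Kk) 1).Nonempty := NormedSpace.sphere_nonempty.mpr zero_le_one
      have hcontq : ContinuousOn (fun m : Kk => |ζ (ε (m:X)) (m:X)|) (Metric.sphere 0 1) := by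
        apply Continuous.continuousOn
        have h1 : Continuous fun m : Kk => (ζ (ε (m:X)), (m:X)) :=
          ((ζ.continuous.comp (ε.continuous.comp continuous_subtype_val))).prodMk
            continuous_subtype_val
        exact (isBoundedBilinearMap_apply.continuous.comp h1).abs
      obtain ⟨mmin, hmminS, hmmin⟩ := hcomp.exists_isMinOn hne hcontq
      refine ⟨|ζ (ε (mmin:X)) (mmin:X)|, ?_, ?_⟩
      · have hmm1 : ‖(mmin:X)‖ = 1 := by
          simpa [Metric.mem_sphere, dist_zero_right] using hmminS
        have hmmne : (mmin:X) ≠ 0 := by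
          intro h; rw [h] at hmm1; simp at hmm1
        exact abs_pos.mpr (hdef _ hmmne)
      · intro m hmK hm1
        have hms : (⟨m, hmK⟩ : Kk) ∈ Metric.sphere (0:Kk) 1 := by
          simpa [Metric.mem_sphere, dist_zero_right] using hm1
        exact hmmin hms
  -- choice of radius r
  set D0 : Xt →L[ℝ] X := fderiv ℝ Ψ 0 with hD0
  set L : ℝ := ‖D0‖ + 1 with hLdef
  set δ : ℝ := c / (2 * (‖ζ‖ * ‖ε‖ * ‖ε‖ + 1)) with hδdef
  have hδpos : 0 < δ := by
    apply div_pos hcpos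
    positivity
  obtain ⟨r, hrpos, hrW, hrD⟩ : ∃ r > 0, Metric.ball (0:Xt) r ⊆ W ∩ V₀ ∧
      ∀ β ∈ Metric.ball (0:Xt) r, ‖fderiv ℝ Ψ β - D0‖ < min δ 1 := by
    have hcontat : ContinuousAt (fderiv ℝ Ψ) 0 := hDΨcont.continuousAt (hV₀.mem_nhds h0V₀)
    have hball : (fderiv ℝ Ψ) ⁻¹' (Metric.ball D0 (min δ 1)) ∈ nhds (0:Xt) := by
      apply hcontat.preimage_mem_nhds
      exact Metric.isOpen_ball.mem_nhds (Metric.mem_ball_self (lt_min hδpos one_pos))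
    have hWV : W ∩ V₀ ∈ nhds (0:Xt) := Filter.inter_mem (hW.mem_nhds h0W) (hV₀.mem_nhds h0V₀)
    obtain ⟨r, hrpos, hrsub⟩ := Metric.mem_nhds_iff.mp (Filter.inter_mem hWV hball)
    refine ⟨r, hrpos, fun β hβ => (hrsub hβ).1, fun β hβ => ?_⟩
    have h2 := (hrsub hβ).2
    simpa [Metric.mem_ball, dist_eq_norm] using h2
  have hrV : Metric.ball (0:Xt) r ⊆ V₀ := fun β hβ => (hrW hβ).2
  have hLbound : ∀ β ∈ Metric.ball (0:Xt) r, ‖fderiv ℝ Ψ β‖ ≤ L := by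
    intro β hβ
    have h1 := hrD β hβ
    have h2 : ‖fderiv ℝ Ψ β‖ ≤ ‖D0‖ + ‖fderiv ℝ Ψ β - D0‖ := by
      have := norm_sub_norm_le (fderiv ℝ Ψ β) D0
      linarith [abs_le.mp (le_refl |‖fderiv ℝ Ψ β‖ - ‖D0‖|)]
    have h3 : ‖fderiv ℝ Ψ β - D0‖ ≤ 1 := le_of_lt (lt_of_lt_of_le h1 (min_le_right _ _))
    rw [hLdef]; linarith
  -- critical points on the K-slice
  have hcrit : ∀ k ∈ Kk, ε k ∈ Metric.ball (0:Xt) r → M (Ψ (ε k)) = 0 := by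
    intro k hk hkball
    have hkV : ε k ∈ V₀ := hrV hkball
    set m : X := k - Pt (ε (Ψ (ε k) - x_inf)) with hmdef
    have hmK : m ∈ Kk := Kk.sub_mem hk (hPt_mem _)
    have hMform : M (Ψ (ε k)) = ε m := by
      rw [hFform _ hkV, hQapp, hmdef]
      simp [map_sub]
    by_cases hm0 : m = 0
    · rw [hMform, hm0, map_zero]
    exfalso
    have hvan := hvanish r hrW k hk hkball m hmK
    rw [hMform] at hvan
    set Dk : Xt →L[ℝ] X := fderiv ℝ Ψ (ε k) with hDk
    have hmnorm : (0:ℝ) < ‖m‖ := norm_pos_iff.mpr hm0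
    set u : X := ‖m‖⁻¹ • m with hu
    have huK : u ∈ Kk := Kk.smul_mem _ hmK
    have hunorm : ‖u‖ = 1 := by
      rw [hu, norm_smul, norm_inv, norm_norm, inv_mul_cancel₀ (ne_of_gt hmnorm)]
    have hvanu : ζ (ε u) (Dk (ε u)) = 0 := by
      have h1 : ζ (ε u) (Dk (ε u)) = (‖m‖⁻¹ * ‖m‖⁻¹) * (ζ (ε m) (Dk (ε m))) := by
        rw [hu, map_smul, map_smul, map_smul, map_smul]
        simp only [ContinuousLinearMap.smul_apply, smul_eq_mul]
        ring
      rw [h1, hvan, mul_zero]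
    have hq := hcmin u huK hunorm
    have hDclose : ‖Dk - D0‖ ≤ δ :=
      le_of_lt (lt_of_lt_of_le (hrD _ hkball) (min_le_left _ _))
    have hkey : |ζ (ε u) u| ≤ ‖ζ‖ * ‖ε‖ * ‖ε‖ * δ := by
      have h2 : ζ (ε u) u = ζ (ε u) ((D0 - Dk) (ε u)) := by
        have h3 : (D0 - Dk) (ε u) = D0 (ε u) - Dk (ε u) := rfl
        rw [h3, map_sub, hDΨ0ε u huK, hvanu, sub_zero]
      rw [h2]
      have b1 : |ζ (ε u) ((D0 - Dk) (ε u))| ≤ ‖ζ (ε u)‖ * ‖(D0 - Dk) (ε u)‖ := by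
        simpa [Real.norm_eq_abs] using (ζ (ε u)).le_opNorm ((D0 - Dk) (ε u))
      have b2 : ‖ζ (ε u)‖ ≤ ‖ζ‖ * ‖ε‖ := by
        calc ‖ζ (ε u)‖ ≤ ‖ζ‖ * ‖ε u‖ := ζ.le_opNorm _
          _ ≤ ‖ζ‖ * (‖ε‖ * ‖u‖) :=
              mul_le_mul_of_nonneg_left (ε.le_opNorm u) (norm_nonneg ζ)
          _ = ‖ζ‖ * ‖ε‖ := by rw [hunorm, mul_one]
      have b3 : ‖(D0 - Dk) (ε u)‖ ≤ ‖D0 - Dk‖ * ‖ε‖ := by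
        calc ‖(D0 - Dk) (ε u)‖ ≤ ‖D0 - Dk‖ * ‖ε u‖ := (D0 - Dk).le_opNorm _
          _ ≤ ‖D0 - Dk‖ * (‖ε‖ * ‖u‖) :=
              mul_le_mul_of_nonneg_left (ε.le_opNorm u) (norm_nonneg _)
          _ = ‖D0 - Dk‖ * ‖ε‖ := by rw [hunorm, mul_one]
      have b4 : ‖D0 - Dk‖ ≤ δ := by rwa [norm_sub_rev]
      calc |ζ (ε u) ((D0 - Dk) (ε u))| ≤ ‖ζ (ε u)‖ * ‖(D0 - Dk) (ε u)‖ := b1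
        _ ≤ (‖ζ‖ * ‖ε‖) * (‖D0 - Dk‖ * ‖ε‖) :=
            mul_le_mul b2 b3 (norm_nonneg _) (by positivity)
        _ ≤ (‖ζ‖ * ‖ε‖) * (δ * ‖ε‖) :=
            mul_le_mul_of_nonneg_left
              (mul_le_mul_of_nonneg_right b4 (norm_nonneg _)) (by positivity)
        _ = ‖ζ‖ * ‖ε‖ * ‖ε‖ * δ := by ring
    have hfin : c ≤ ‖ζ‖ * ‖ε‖ * ‖ε‖ * δ := le_trans hq hkey
    have hδeq : δ * (2 * (‖ζ‖ * ‖ε‖ * ‖ε‖ + 1)) = c := by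
      rw [hδdef]; field_simp
    nlinarith [norm_nonneg ζ, norm_nonneg ε, hcpos, hδpos,
      mul_nonneg (mul_nonneg (norm_nonneg ζ) (norm_nonneg ε)) (norm_nonneg ε),
      mul_pos hδpos hδpos]
  -- final assembly
  set r' : ℝ := r / (1 + ‖Q‖) with hr'def
  have hQnn : (0:ℝ) ≤ ‖Q‖ := norm_nonneg _
  have h1Q : (0:ℝ) < 1 + ‖Q‖ := by linarith
  have hr'pos : 0 < r' := div_pos hrpos h1Q
  have hrr' : (1 + ‖Q‖) * r' = r := by
    rw [hr'def]; field_simp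
  have hr'r : r' ≤ r := by nlinarith
  have hΦcont : ContinuousOn (fun x => M x + ε (Pt (ε (x - x_inf)))) U₀ := by
    apply ContinuousOn.add ((hMC1.continuousOn).mono hU₀U)
    exact Continuous.continuousOn (by fun_prop)
  set W₀ : Set X := U₀ ∩ (fun x => M x + ε (Pt (ε (x - x_inf)))) ⁻¹' (Metric.ball 0 r')
    with hW₀def
  have hW₀open : IsOpen W₀ := hΦcont.isOpen_inter_preimage hU₀ Metric.isOpen_ball
  set L1 : ℝ := 1 + ‖Q‖ * ‖ε‖ * L with hL1def
  have hLnn : (0:ℝ) ≤ L := by rw [hLdef]; positivity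
  have hL1nn : (0:ℝ) ≤ L1 := by rw [hL1def]; positivity
  set CB : ℝ := ‖ζ‖ * L1 * L with hCBdef
  have hCBnn : (0:ℝ) ≤ CB := by
    rw [hCBdef]
    exact mul_nonneg (mul_nonneg (norm_nonneg ζ) hL1nn) hLnn
  refine ⟨W₀, max 1 (CB * (1 + ‖Q‖)^2), hW₀open, ⟨hxU₀, ?_⟩,
    fun y hy => hU₀U hy.1, le_max_left _ _, ?_⟩
  · show (M x_inf + ε (Pt (ε (x_inf - x_inf)))) ∈ Metric.ball (0:Xt) r'
    rw [hΦx0]; exact Metric.mem_ball_self hr'pos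
  intro x hxW
  obtain ⟨hxU₀', hxball⟩ := hxW
  set α : Xt := M x + ε (Pt (ε (x - x_inf))) with hαdef
  have hαr' : ‖α‖ < r' := by
    have h := hxball
    simp only [Set.mem_preimage, Metric.mem_ball, dist_zero_right] at h
    rw [hαdef]; exact h
  have hαr : ‖α‖ < r := lt_of_lt_of_le hαr' hr'r
  have hαball : α ∈ Metric.ball (0:Xt) r := by
    simpa [Metric.mem_ball, dist_zero_right] using hαr
  have hαV : α ∈ V₀ := hrV hαball
  have hQαnorm : ‖Q α‖ < r := by
    have h := Q.le_opNorm α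
    have h2 : ‖Q‖ * ‖α‖ ≤ ‖Q‖ * r' := mul_le_mul_of_nonneg_left (le_of_lt hαr') hQnn
    have h3 : r' + ‖Q‖ * r' = r := by rw [← hrr']; ring
    linarith
  have hQαball : Q α ∈ Metric.ball (0:Xt) r := by
    simpa [Metric.mem_ball, dist_zero_right] using hQαnorm
  have hQαV : Q α ∈ V₀ := hrV hQαball
  have hM0 : M (Ψ (Q α)) = 0 := hcrit (Pt α) (hPt_mem α) hQαball
  have hαQα : α - Q α = M x - Q (M x) := by
    have h1 : Q α = Q (M x) + Q (ε (Pt (ε (x - x_inf)))) := by rw [hαdef, map_add]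
    have h2 : Q (ε (Pt (ε (x - x_inf)))) = ε (Pt (ε (x - x_inf))) := by
      rw [hQapp, hPtε _ (hPt_mem _)]
    rw [h1, h2, hαdef]; abel
  have hαQαnorm : ‖α - Q α‖ ≤ (1 + ‖Q‖) * ‖M x‖ := by
    rw [hαQα]
    calc ‖M x - Q (M x)‖ ≤ ‖M x‖ + ‖Q (M x)‖ := norm_sub_le _ _
      _ ≤ ‖M x‖ + ‖Q‖ * ‖M x‖ := by linarith [Q.le_opNorm (M x)]
      _ = (1 + ‖Q‖) * ‖M x‖ := by ring
  have hseg : segment ℝ (Q α) α ⊆ Metric.ball (0:Xt) r :=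
    (convex_ball (0:Xt) r).segment_subset hQαball hαball
  have hsegdist : ∀ β ∈ segment ℝ (Q α) α, ‖β - Q α‖ ≤ ‖α - Q α‖ := by
    intro β hβ
    obtain ⟨a, b, ha, hb, hab, hβeq⟩ := hβ
    have hb1 : b ≤ 1 := by linarith
    have heq : β - Q α = b • (α - Q α) := by
      rw [← hβeq]
      calc a • Q α + b • α - Q α = a • Q α + b • α - (a + b) • Q α := by rw [hab, one_smul]
        _ = b • (α - Q α) := by rw [add_smul, smul_sub]; abel
    rw [heq, norm_smul, Real.norm_of_nonneg hb]
    exact mul_le_of_le_one_left (norm_nonneg _) hb1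
  have hΨLip : ∀ β ∈ Metric.ball (0:Xt) r, ‖Ψ β - Ψ (Q α)‖ ≤ L * ‖β - Q α‖ := by
    intro β hβ
    exact Convex.norm_image_sub_le_of_norm_fderiv_le
      (fun γ hγ => hΨdiff γ (hrV hγ)) hLbound (convex_ball _ _) hQαball hβ
  have hFbound : ∀ β ∈ segment ℝ (Q α) α, ‖M (Ψ β)‖ ≤ L1 * ‖α - Q α‖ := by
    intro β hβ
    have hβball := hseg hβ
    have hβV := hrV hβball
    have hform : M (Ψ β) = (β - Q α) - Q (ε (Ψ β - Ψ (Q α))) := by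
      have h1 := hFform β hβV
      have h2 := hFform (Q α) hQαV
      rw [hM0] at h2
      have h4 : Q (ε (Ψ (Q α) - x_inf)) = Q α := (sub_eq_zero.mp h2.symm).symm
      have h3 : Ψ β - x_inf = (Ψ β - Ψ (Q α)) + (Ψ (Q α) - x_inf) := by abel
      rw [h1, h3, map_add, map_add, h4]
      abel
    rw [hform]
    have hd := hsegdist β hβ
    have hb1 : ‖(β - Q α) - Q (ε (Ψ β - Ψ (Q α)))‖
        ≤ ‖β - Q α‖ + ‖Q‖ * (‖ε‖ * (L * ‖β - Q α‖)) := by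
      have c1 : ‖Q (ε (Ψ β - Ψ (Q α)))‖ ≤ ‖Q‖ * (‖ε‖ * (L * ‖β - Q α‖)) := by
        calc ‖Q (ε (Ψ β - Ψ (Q α)))‖ ≤ ‖Q‖ * ‖ε (Ψ β - Ψ (Q α))‖ := Q.le_opNorm _
          _ ≤ ‖Q‖ * (‖ε‖ * ‖Ψ β - Ψ (Q α)‖) :=
              mul_le_mul_of_nonneg_left (ε.le_opNorm _) hQnn
          _ ≤ ‖Q‖ * (‖ε‖ * (L * ‖β - Q α‖)) := by
              apply mul_le_mul_of_nonneg_left _ hQnn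
              exact mul_le_mul_of_nonneg_left (hΨLip β hβball) (norm_nonneg ε)
      calc ‖(β - Q α) - Q (ε (Ψ β - Ψ (Q α)))‖
          ≤ ‖β - Q α‖ + ‖Q (ε (Ψ β - Ψ (Q α)))‖ := norm_sub_le _ _
        _ ≤ ‖β - Q α‖ + ‖Q‖ * (‖ε‖ * (L * ‖β - Q α‖)) := by linarith
    have e1 : ‖Q‖ * (‖ε‖ * (L * ‖β - Q α‖)) = (‖Q‖ * ‖ε‖ * L) * ‖β - Q α‖ := by ring
    have e2 : (1 + ‖Q‖ * ‖ε‖ * L) * ‖α - Q α‖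
        = ‖α - Q α‖ + (‖Q‖ * ‖ε‖ * L) * ‖α - Q α‖ := by ring
    have h5 : (‖Q‖ * ‖ε‖ * L) * ‖β - Q α‖ ≤ (‖Q‖ * ‖ε‖ * L) * ‖α - Q α‖ :=
      mul_le_mul_of_nonneg_left hd (mul_nonneg (mul_nonneg hQnn (norm_nonneg ε)) hLnn)
    rw [hL1def]
    linarith
  have hgbound : ∀ β ∈ segment ℝ (Q α) α, ‖fderiv ℝ (E ∘ Ψ) β‖ ≤ CB * ‖α - Q α‖ := by
    intro β hβ
    have hβV := hrV (hseg hβ)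
    rw [hfg β hβV]
    calc ‖(ζ (M (Ψ β))).comp (fderiv ℝ Ψ β)‖ ≤ ‖ζ (M (Ψ β))‖ * ‖fderiv ℝ Ψ β‖ :=
        ContinuousLinearMap.opNorm_comp_le _ _
      _ ≤ (‖ζ‖ * (L1 * ‖α - Q α‖)) * L := by
          apply mul_le_mul _ (hLbound β (hseg hβ)) (norm_nonneg _)
          · apply mul_nonneg (norm_nonneg ζ)
            exact mul_nonneg hL1nn (norm_nonneg _)
          · calc ‖ζ (M (Ψ β))‖ ≤ ‖ζ‖ * ‖M (Ψ β)‖ := ζ.le_opNorm _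
              _ ≤ ‖ζ‖ * (L1 * ‖α - Q α‖) :=
                  mul_le_mul_of_nonneg_left (hFbound β hβ) (norm_nonneg ζ)
      _ = (CB * ‖α - Q α‖) := by rw [hCBdef]; ring
  have hMVT : ‖(E ∘ Ψ) α - (E ∘ Ψ) (Q α)‖ ≤ (CB * ‖α - Q α‖) * ‖α - Q α‖ :=
    Convex.norm_image_sub_le_of_norm_fderiv_le
      (fun γ hγ => hgdiff γ (hrV (hseg hγ))) hgbound (convex_segment _ _)
      (left_mem_segment ℝ _ _) (right_mem_segment ℝ _ _)
  have hgα : (E ∘ Ψ) α = E x := by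
    show E (Ψ α) = E x
    rw [hαdef]
    exact congrArg E (hΨΦ x hxU₀')
  have hgQα : (E ∘ Ψ) (Q α) = E x_inf := hconst _ (hrW hQαball) ⟨Pt α, hPt_mem α, rfl⟩
  have habs : |E x - E x_inf| ≤ CB * ‖α - Q α‖^2 := by
    rw [← hgα, ← hgQα]
    have h := hMVT
    rw [Real.norm_eq_abs] at h
    calc |(E ∘ Ψ) α - (E ∘ Ψ) (Q α)| ≤ (CB * ‖α - Q α‖) * ‖α - Q α‖ := h
      _ = CB * ‖α - Q α‖^2 := by ring
  calc |E x - E x_inf| ≤ CB * ‖α - Q α‖^2 := habs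
    _ ≤ CB * ((1 + ‖Q‖) * ‖M x‖)^2 :=
        mul_le_mul_of_nonneg_left (pow_le_pow_left₀ (norm_nonneg _) hαQαnorm 2) hCBnn
    _ = (CB * (1+‖Q‖)^2) * ‖M x‖^2 := by ring
    _ ≤ max 1 (CB * (1+‖Q‖)^2) * ‖M x‖^2 :=
        mul_le_mul_of_nonneg_right (le_max_right _ _) (by positivity)
end
end

section
/- (Invertibility of the projectively perturbed Hessian operator.) Let X and X̃ be Banach spaces with continuous linear embeddings ε : X → X̃ and ζ : X̃ → X* such that j := ζ ∘ ε is a definite embedding. Let T : X → X̃ be a continuous linear operator that is Fredholm of index zero and symmetric with respect to the duality pairing, i.e. (ζ(T x))(y) = (ζ(T y))(x) for all x, y ∈ X. Let K := ker T and let P : X → X be a continuous linear projection (P ∘ P = P) with range K. Then the continuous linear operator X → X̃ given by x ↦ T x + ε(P x) is bijective, hence a Banach space isomorphism. -/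
open Function Set

noncomputable section

/-- Invertibility of the projectively perturbed Hessian operator: if `T : X → X̃` is a
symmetric Fredholm operator of index zero and `P : X → X` is a continuous projection onto
`ker T`, then `x ↦ T x + ε (P x)` is bijective (hence a Banach space isomorphism). -/
theorem perturbed_hessian_operator_bijective
    {X Xt : Type*} [NormedAddCommGroup X] [NormedSpace ℝ X] [CompleteSpace X]
    [NormedAddCommGroup Xt] [NormedSpace ℝ Xt] [CompleteSpace Xt]
    (ε : X →L[ℝ] Xt) (hε : Function.Injective ε)
    (ζ : Xt →L[ℝ] StrongDual ℝ X) (hζ : Function.Injective ζ)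
    (hdef : ∀ x : X, x ≠ 0 → ζ (ε x) x ≠ 0)
    (T : X →L[ℝ] Xt) (hT : FredholmIndexZero T)
    (hsym : ∀ x y : X, ζ (T x) y = ζ (T y) x)
    (P : X →L[ℝ] X) (hP_idem : P.comp P = P)
    (hP_range : LinearMap.range (P : X →ₗ[ℝ] X) = LinearMap.ker (T : X →ₗ[ℝ] Xt)) :
    Function.Bijective (fun x : X => T x + ε (P x)) := by
  obtain ⟨hfK, hclosed, hfQ, hrank⟩ := hT
  haveI := hfK
  haveI := hfQ
  have hPk : ∀ k ∈ LinearMap.ker (T : X →ₗ[ℝ] Xt), P k = k := by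
    intro k hk
    rw [← hP_range] at hk
    obtain ⟨z, rfl⟩ := hk
    have := congrArg (fun (Q : X →L[ℝ] X) => Q z) hP_idem
    simpa using this
  have hTP : ∀ x : X, T (P x) = 0 := by
    intro x
    have : P x ∈ LinearMap.ker (T : X →ₗ[ℝ] Xt) := hP_range ▸ LinearMap.mem_range_self _ x
    exact this
  have hfun : (fun x : X => T x + ε (P x)) = ⇑(T + ε.comp P) := by
    ext x; simp
  rw [hfun]
  constructor
  · -- injectivity
    rw [injective_iff_map_eq_zero]
    intro x hx
    simp only [ContinuousLinearMap.add_apply, ContinuousLinearMap.comp_apply] at hx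
    have h1 : ζ (ε (P x)) (P x) = 0 := by
      have h2 : ζ (T x + ε (P x)) (P x) = 0 := by rw [hx]; simp
      have h3 : ζ (T x) (P x) = 0 := by
        rw [hsym, hTP]; simp
      simp only [map_add, ContinuousLinearMap.add_apply] at h2
      linarith
    have hPx : P x = 0 := by
      by_contra h
      exact hdef _ h h1
    have hTx : T x = 0 := by
      rw [hPx] at hx; simpa using hx
    have hxk : x ∈ LinearMap.ker (T : X →ₗ[ℝ] Xt) := hTx
    have := hPk x hxk
    rw [hPx] at this
    exact this.symm
  · -- surjectivity
    let q : Xt →ₗ[ℝ] Xt ⧸ LinearMap.range (T : X →ₗ[ℝ] Xt) := (LinearMap.range (T : X →ₗ[ℝ] Xt)).mkQ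
    let f : (LinearMap.ker (T : X →ₗ[ℝ] Xt)) →ₗ[ℝ] Xt ⧸ (LinearMap.range (T : X →ₗ[ℝ] Xt)) :=
      (q.comp (ε : X →ₗ[ℝ] Xt)).comp (LinearMap.ker (T : X →ₗ[ℝ] Xt)).subtype
    have hfinj : Function.Injective f := by
      rw [injective_iff_map_eq_zero]
      intro k hk
      have hmem : ε (k : X) ∈ LinearMap.range (T : X →ₗ[ℝ] Xt) := by
        simpa [f, q, Submodule.Quotient.mk_eq_zero] using hk
      obtain ⟨x, hxk⟩ := hmem
      change T x = _ at hxk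
      ext
      by_contra h
      apply hdef _ h
      calc ζ (ε (k : X)) (k : X) = ζ (T x) (k : X) := by rw [hxk]
        _ = ζ (T (k : X)) x := hsym _ _
        _ = 0 := by rw [show T (k : X) = 0 from k.2]; simp
    have hfsurj : Function.Surjective f :=
      (LinearMap.injective_iff_surjective_of_finrank_eq_finrank hrank).mp hfinj
    intro y
    obtain ⟨k, hk⟩ := hfsurj (q y)
    have hmem : y - ε (k : X) ∈ LinearMap.range (T : X →ₗ[ℝ] Xt) := by
      rw [← Submodule.Quotient.eq]
      exact hk.symm
    obtain ⟨x, hxk⟩ := hmem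
    change T x = _ at hxk
    refine ⟨x + (k : X) - P x, ?_⟩
    have hTk : T (k : X) = 0 := k.2
    have hPkk : P (k : X) = (k : X) := hPk _ k.2
    simp only [ContinuousLinearMap.add_apply, ContinuousLinearMap.comp_apply, map_sub, map_add,
      hTk, hTP, hPkk]
    have hPP : P (P x) = P x := by
      have := congrArg (fun (Q : X →L[ℝ] X) => Q x) hP_idem
      simpa using this
    rw [hPP]
    rw [hxk]
    abel
end
end

section
/- (Quadratic estimate for the difference with the Lyapunov–Schmidt reduction.) In Setting (B), with K, Π, Φ as above, there exist open neighborhoods U₁ ⊆ U of x∞ and V₁ ⊆ X̃ of 0 and a C¹ map Ψ : V₁ → U₁ with Φ(Ψ(α)) = α for all α ∈ V₁ and Ψ(Φ(x)) = x for all x ∈ U₁, together with an open neighborhood V₀ ⊆ V₁ of 0 satisfying Π(V₀) ⊆ V₁ and a constant C ∈ [1,∞), such that |E(Ψ(α)) − E(Ψ(Π(α)))| ≤ C · ‖M(Ψ(α))‖²_{X̃} for all α ∈ V₀. -/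
open Function Set Topology Filter

set_option maxHeartbeats 4000000

noncomputable section

/-- Quadratic estimate for the difference with the Lyapunov–Schmidt reduction:
`|E (Ψ α) - E (Ψ (Π α))| ≤ C ‖M (Ψ α)‖²_{X̃}` (Setting (B)). -/
theorem quadratic_estimate_lyapunov_schmidt
    {X Xt : Type*} [NormedAddCommGroup X] [NormedSpace ℝ X] [CompleteSpace X]
    [NormedAddCommGroup Xt] [NormedSpace ℝ Xt] [CompleteSpace Xt]
    -- Setting (B)
    (ε : X →L[ℝ] Xt) (hε : Function.Injective ε)
    (ζ : Xt →L[ℝ] StrongDual ℝ X) (hζ : Function.Injective ζ)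
    (hdef : ∀ x : X, x ≠ 0 → ζ (ε x) x ≠ 0)
    (U : Set X) (hU : IsOpen U)
    (E : X → ℝ) (hE : ContDiffOn ℝ 2 E U)
    (M : X → Xt) (hMC1 : ContDiffOn ℝ 1 M U)
    (hgrad : ∀ x ∈ U, ∀ v : X, fderiv ℝ E x v = ζ (M x) v)
    (x_inf : X) (hx : x_inf ∈ U) (hMcrit : M x_inf = 0)
    (hFred : FredholmIndexZero (fderiv ℝ M x_inf))
    -- K = ker M'(x_inf); Π : X* → X* a continuous projection with range j(K),
    -- inducing Pt : X̃ → X.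
    (Pd : StrongDual ℝ X →L[ℝ] StrongDual ℝ X)
    (hPd_idem : Pd.comp Pd = Pd)
    (hPd_range : LinearMap.range (Pd : StrongDual ℝ X →ₗ[ℝ] StrongDual ℝ X)
      = Submodule.map ((ζ.comp ε : X →L[ℝ] StrongDual ℝ X) : X →ₗ[ℝ] StrongDual ℝ X) (LinearMap.ker (fderiv ℝ M x_inf : X →ₗ[ℝ] Xt)))
    (Pt : Xt →L[ℝ] X)
    (hPt_mem : ∀ y : Xt, Pt y ∈ LinearMap.ker (fderiv ℝ M x_inf : X →ₗ[ℝ] Xt))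
    (hPt_compat : ∀ y : Xt, ζ (ε (Pt y)) = Pd (ζ y)) :
    ∃ (U₁ : Set X) (V₁ : Set Xt) (Ψ : Xt → X),
      IsOpen U₁ ∧ x_inf ∈ U₁ ∧ U₁ ⊆ U ∧ IsOpen V₁ ∧ (0 : Xt) ∈ V₁ ∧
      ContDiffOn ℝ 1 Ψ V₁ ∧ MapsTo Ψ V₁ U₁ ∧
      (∀ α ∈ V₁, M (Ψ α) + ε (Pt (ε (Ψ α - x_inf))) = α) ∧
      (∀ x ∈ U₁, Ψ (M x + ε (Pt (ε (x - x_inf)))) = x) ∧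
      ∃ (V₀ : Set Xt) (C : ℝ),
        IsOpen V₀ ∧ (0 : Xt) ∈ V₀ ∧ V₀ ⊆ V₁ ∧
        (∀ α ∈ V₀, ε (Pt α) ∈ V₁) ∧ 1 ≤ C ∧
        ∀ α ∈ V₀, |E (Ψ α) - E (Ψ (ε (Pt α)))| ≤ C * ‖M (Ψ α)‖ ^ 2 := by
  classical
  set T := fderiv ℝ M x_inf with hT
  -- basic differentiability facts
  have hMdiffAt : HasFDerivAt M T x_inf :=
    ((hMC1.contDiffAt (hU.mem_nhds hx)).differentiableAt one_ne_zero).hasFDerivAt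
  have hEdiffAt : ∀ y ∈ U, HasFDerivAt E (ζ (M y)) y := by
    intro y hy
    have h1 : DifferentiableAt ℝ E y :=
      (hE.contDiffAt (hU.mem_nhds hy)).differentiableAt two_ne_zero
    have h2 : fderiv ℝ E y = ζ (M y) := ContinuousLinearMap.ext (hgrad y hy)
    exact h2 ▸ h1.hasFDerivAt
  have hζM : HasFDerivAt (fun y => ζ (M y)) (ζ.comp T) x_inf :=
    ζ.hasFDerivAt.comp x_inf hMdiffAt
  have hsymm : ∀ v w : X, ζ (T v) w = ζ (T w) v := by
    intro v w
    have h := second_derivative_symmetric_of_eventually (f := E)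
      (f' := fun y => ζ (M y)) (f'' := ζ.comp T) (x := x_inf)
      (by filter_upwards [hU.mem_nhds hx] with y hy using hEdiffAt y hy) hζM v w
    simpa using h
  have hdisj : ∀ k v : X, T k = 0 → T v = ε k → k = 0 := by
    intro k v hk hv
    by_contra hne
    apply hdef k hne
    have h1 : ζ (ε k) k = ζ (T v) k := by rw [hv]
    rw [h1, hsymm v k, hk]
    simp
  have L1 : ∀ v : X, T v = 0 → Pt (ε v) = v := by
    intro v hv
    have hmem : ζ (ε v) ∈ LinearMap.range (Pd : StrongDual ℝ X →ₗ[ℝ] StrongDual ℝ X) := by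
      rw [hPd_range]
      exact ⟨v, by simpa [LinearMap.mem_ker] using hv, rfl⟩
    obtain ⟨u, hu⟩ := hmem
    apply hε; apply hζ
    rw [hPt_compat, ← hu]
    calc Pd (Pd u) = (Pd.comp Pd) u := rfl
    _ = Pd u := by rw [hPd_idem]
  -- the linearization of the Lyapunov-Schmidt map is a Banach space isomorphism
  set B := ε.comp Pt with hB
  -- construct the local inverse via the inverse function theorem
  have hpart3 :
    ∃ (U₁ : Set X) (V₁ : Set Xt) (Ψ : Xt → X),
      IsOpen U₁ ∧ x_inf ∈ U₁ ∧ U₁ ⊆ U ∧ IsOpen V₁ ∧ (0 : Xt) ∈ V₁ ∧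
      ContDiffOn ℝ 1 Ψ V₁ ∧ MapsTo Ψ V₁ U₁ ∧
      (∀ α ∈ V₁, M (Ψ α) + ε (Pt (ε (Ψ α - x_inf))) = α) ∧
      (∀ x ∈ U₁, Ψ (M x + ε (Pt (ε (x - x_inf)))) = x) := by
    set A := T + B.comp ε with hA
    have hAapp : ∀ v : X, A v = T v + ε (Pt (ε v)) := fun v => rfl
    have hAinj : Function.Injective A := by
      have key : ∀ v, A v = 0 → v = 0 := by
        intro v hv
        have hk : T (Pt (ε v)) = 0 := hPt_mem (ε v)
        have h1 : T (-v) = ε (Pt (ε v)) := by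
          rw [map_neg, neg_eq_iff_add_eq_zero]
          simpa [hAapp] using hv
        have hk0 : Pt (ε v) = 0 := hdisj _ _ hk h1
        have hTv : T v = 0 := by simpa [hAapp, hk0] using hv
        have := L1 v hTv
        rw [hk0] at this; exact this.symm
      intro a b h
      have : a - b = 0 := key _ (by rw [map_sub, h, sub_self])
      exact sub_eq_zero.mp this
    haveI hker_fd : FiniteDimensional ℝ (LinearMap.ker (T : X →ₗ[ℝ] Xt)) := hFred.1
    haveI hquot_fd : FiniteDimensional ℝ (Xt ⧸ LinearMap.range (T : X →ₗ[ℝ] Xt)) := hFred.2.2.1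
    have hrank : Module.finrank ℝ (LinearMap.ker (T : X →ₗ[ℝ] Xt))
        = Module.finrank ℝ (Xt ⧸ LinearMap.range (T : X →ₗ[ℝ] Xt)) := hFred.2.2.2
    set φ : LinearMap.ker (T : X →ₗ[ℝ] Xt) →ₗ[ℝ] Xt ⧸ LinearMap.range (T : X →ₗ[ℝ] Xt) :=
      ((LinearMap.range (T : X →ₗ[ℝ] Xt)).mkQ.comp (ε : X →ₗ[ℝ] Xt)).comp (LinearMap.ker (T : X →ₗ[ℝ] Xt)).subtype with hφ
    have hφinj : Function.Injective φ := by
      intro k1 k2 h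
      have h1 : Submodule.Quotient.mk (p := LinearMap.range (T : X →ₗ[ℝ] Xt)) (ε (k1 : X))
          = Submodule.Quotient.mk (ε (k2 : X)) := h
      have h2 : ε ((k1 : X) - k2) ∈ LinearMap.range (T : X →ₗ[ℝ] Xt) := by
        rw [← Submodule.Quotient.mk_eq_zero, map_sub, Submodule.Quotient.mk_sub, h1, sub_self]
      obtain ⟨v, hv⟩ := h2
      have hk12 : T ((k1 : X) - k2) = 0 := by
        rw [map_sub]
        have e1 : T (k1 : X) = 0 := k1.2
        have e2 : T (k2 : X) = 0 := k2.2
        rw [e1, e2, sub_self]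
      have := hdisj _ v hk12 hv
      exact Subtype.ext (sub_eq_zero.mp this)
    have hφsurj : Function.Surjective φ :=
      (LinearMap.injective_iff_surjective_of_finrank_eq_finrank hrank).mp hφinj
    have hAsurj : Function.Surjective A := by
      intro y
      obtain ⟨k, hk⟩ := hφsurj ((LinearMap.range (T : X →ₗ[ℝ] Xt)).mkQ y)
      have h2 : y - ε (k : X) ∈ LinearMap.range (T : X →ₗ[ℝ] Xt) := by
        rw [← Submodule.Quotient.mk_eq_zero, Submodule.Quotient.mk_sub]
        have : Submodule.Quotient.mk (p := LinearMap.range (T : X →ₗ[ℝ] Xt)) (ε (k : X))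
            = Submodule.Quotient.mk y := hk
        rw [this, sub_self]
      obtain ⟨v, hv⟩ := h2
      refine ⟨v + ((k : X) - Pt (ε v)), ?_⟩
      have hTk : T (k : X) = 0 := k.2
      have hTPt : ∀ z : Xt, T (Pt z) = 0 := fun z => hPt_mem z
      have hfix : Pt (ε ((k : X) - Pt (ε v))) = (k : X) - Pt (ε v) := by
        apply L1
        rw [map_sub, hTk, hTPt, sub_self]
      rw [hAapp, map_add, map_add, map_sub, hTk, hTPt, map_add, hfix]
      rw [show T v = y - ε (k : X) from hv]
      have : Pt (ε v) + ((k : X) - Pt (ε v)) = (k : X) := by abel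
      rw [this]
      abel
    set eA : X ≃L[ℝ] Xt :=
      (LinearEquiv.ofBijective (A : X →ₗ[ℝ] Xt)
        ⟨hAinj, hAsurj⟩).toContinuousLinearEquivOfContinuous A.continuous with heAdef
    have heA : (eA : X →L[ℝ] Xt) = T + B.comp ε := by
      ext v; rfl
    set Φ : X → Xt := fun x => M x + ε (Pt (ε (x - x_inf))) with hΦ
    have hΦc : ContDiffAt ℝ 1 Φ x_inf := by
      apply (hMC1.contDiffAt (hU.mem_nhds hx)).add
      exact ((B.comp ε).contDiff.comp (contDiff_id.sub contDiff_const)).contDiffAt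
    have hΦA : HasFDerivAt Φ (T + B.comp ε) x_inf := by
      have h2 := (B.comp ε).hasFDerivAt.comp x_inf ((hasFDerivAt_id x_inf).sub_const x_inf)
      have h2' : HasFDerivAt (fun x : X => ε (Pt (ε (x - x_inf)))) (B.comp ε) x_inf := by
        simp only [Function.comp_def, ContinuousLinearMap.coe_comp',
          ContinuousLinearMap.comp_id] at h2
        exact h2
      exact hMdiffAt.add h2'
    have hΦd : HasFDerivAt Φ (eA : X →L[ℝ] Xt) x_inf := by rw [heA]; exact hΦA
    set F := hΦc.toOpenPartialHomeomorph Φ hΦd one_ne_zero with hF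
    have hFcoe : (F : X → Xt) = Φ := rfl
    have hΦ0 : Φ x_inf = 0 := by simp [hΦ, hMcrit]
    have hsrc : x_inf ∈ F.source := hΦc.mem_toOpenPartialHomeomorph_source hΦd one_ne_zero
    have htgt : (0 : Xt) ∈ F.target := by
      have := hΦc.image_mem_toOpenPartialHomeomorph_target hΦd one_ne_zero
      rwa [hΦ0] at this
    set Ψ : Xt → X := ⇑F.symm with hΨ
    have hΨcd : ContDiffAt ℝ 1 Ψ 0 := by
      have h := hΦc.to_localInverse hΦd one_ne_zero
      rw [hΦ0] at h
      exact h
    obtain ⟨W, hWn, hWcd⟩ := hΨcd.contDiffOn le_rfl (by simp)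
    obtain ⟨O, hOW, hOopen, hO0⟩ := mem_nhds_iff.mp hWn
    set V₁ : Set Xt := (F.target ∩ F.symm ⁻¹' U) ∩ O with hV₁
    have hV₁open : IsOpen V₁ := (F.symm.isOpen_inter_preimage hU).inter hOopen
    have hΨ0 : Ψ 0 = x_inf := by
      have := F.left_inv hsrc
      rw [hFcoe, hΦ0] at this
      exact this
    have h0V₁ : (0 : Xt) ∈ V₁ := by
      refine ⟨⟨htgt, ?_⟩, hO0⟩
      show Ψ 0 ∈ U
      rw [hΨ0]; exact hx
    set U₁ : Set X := F.source ∩ F ⁻¹' V₁ with hU₁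
    have hU₁open : IsOpen U₁ := F.isOpen_inter_preimage hV₁open
    have hxU₁ : x_inf ∈ U₁ := ⟨hsrc, by rw [mem_preimage, hFcoe, hΦ0]; exact h0V₁⟩
    have hU₁U : U₁ ⊆ U := by
      rintro x ⟨hxs, hxp⟩
      have h1 : Ψ (F x) ∈ U := (mem_preimage.mp hxp).1.2
      rwa [show Ψ (F x) = x from F.left_inv hxs] at h1
    have hmaps : MapsTo Ψ V₁ U₁ := by
      rintro α ⟨⟨hαt, hαU⟩, hαO⟩
      refine ⟨F.map_target hαt, ?_⟩
      rw [mem_preimage, F.right_inv hαt]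
      exact ⟨⟨hαt, hαU⟩, hαO⟩
    refine ⟨U₁, V₁, Ψ, hU₁open, hxU₁, hU₁U, hV₁open, h0V₁,
      hWcd.mono (fun γ hγ => hOW hγ.2), hmaps, ?_, ?_⟩
    · intro α hα
      have := F.right_inv hα.1.1
      rw [hFcoe] at this
      exact this
    · intro x hxm
      have := F.left_inv hxm.1
      rw [hFcoe] at this
      exact this
  obtain ⟨U₁, V₁, Ψ, hU₁open, hxU₁, hU₁U, hV₁open, h0V₁, hΨV, hmaps, hinv, hlinv⟩ := hpart3
  refine ⟨U₁, V₁, Ψ, hU₁open, hxU₁, hU₁U, hV₁open, h0V₁, hΨV, hmaps, hinv, hlinv, ?_⟩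
  -- the quadratic estimate
  clear hsymm hζM hMdiffAt hdisj hFred hPd_idem hPd_range hPt_compat hdef hζ hε hE hgrad
  have hΨU : ∀ α ∈ V₁, Ψ α ∈ U := fun α hα => hU₁U (hmaps hα)
  have L1' : ∀ z : Xt, Pt (ε (Pt z)) = Pt z := fun z => L1 (Pt z) (hPt_mem z)
  set N : Xt → X := fun γ => Pt (M (Ψ γ)) with hNdef
  -- key identity
  have I1 : ∀ γ ∈ V₁, M (Ψ γ) = (γ - ε (Pt γ)) + ε (N γ) := by
    intro γ hγ
    have h0 := hinv γ hγ
    have h1 : N γ + Pt (ε (Ψ γ - x_inf)) = Pt γ := by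
      have := congrArg Pt h0
      rwa [map_add, L1'] at this
    have h2 : Pt (ε (Ψ γ - x_inf)) = Pt γ - N γ := by
      rw [← h1]; abel
    calc M (Ψ γ)
        = (M (Ψ γ) + ε (Pt (ε (Ψ γ - x_inf)))) - ε (Pt (ε (Ψ γ - x_inf))) := by abel
      _ = γ - ε (Pt γ - N γ) := by rw [h0, h2]
      _ = (γ - ε (Pt γ)) + ε (N γ) := by rw [map_sub]; abel
  -- smoothness of N, lipschitz bounds
  have hMΨ : ContDiffOn ℝ 1 (fun γ => M (Ψ γ)) V₁ := hMC1.comp hΨV (fun γ hγ => hΨU γ hγ)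
  have hN : ContDiffOn ℝ 1 N V₁ := Pt.contDiff.comp_contDiffOn hMΨ
  obtain ⟨K₂, t₂, ht₂n, hlip⟩ := (hN.contDiffAt (hV₁open.mem_nhds h0V₁)).exists_lipschitzOnWith
  have hfdΨ : ContinuousOn (fderiv ℝ Ψ) V₁ := hΨV.continuousOn_fderiv_of_isOpen hV₁open le_rfl
  set D : ℝ := ‖fderiv ℝ Ψ 0‖ + 1 with hD
  have hDev : ∀ᶠ γ in 𝓝 (0:Xt), ‖fderiv ℝ Ψ γ‖ < D := by
    have hc : ContinuousAt (fun γ => ‖fderiv ℝ Ψ γ‖) 0 :=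
      (hfdΨ.continuousAt (hV₁open.mem_nhds h0V₁)).norm
    exact hc.eventually_lt continuousAt_const (by rw [hD]; simp)
  have hev : ∀ᶠ γ in 𝓝 (0:Xt), γ ∈ V₁ ∧ γ ∈ t₂ ∧ ‖fderiv ℝ Ψ γ‖ ≤ D := by
    filter_upwards [hV₁open.mem_nhds h0V₁, ht₂n, hDev] with γ h1 h2 h3
    exact ⟨h1, h2, h3.le⟩
  obtain ⟨ρ, hρpos, hρ⟩ := Metric.eventually_nhds_iff_ball.mp hev
  set r := ρ / (1 + ‖B‖) with hr
  have hBnn : (0:ℝ) ≤ ‖B‖ := norm_nonneg _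
  have hrpos : 0 < r := div_pos hρpos (by linarith)
  have hrρ : r ≤ ρ := div_le_self hρpos.le (by linarith)
  set V₀ := Metric.ball (0:Xt) r with hV₀
  have hball : ∀ α ∈ V₀, ‖α‖ < ρ ∧ ‖B α‖ < ρ := by
    intro α hα
    have hn : ‖α‖ < r := by simpa [hV₀, Metric.mem_ball, dist_zero_right] using hα
    refine ⟨lt_of_lt_of_le hn hrρ, ?_⟩
    have h1 : ‖B α‖ ≤ ‖B‖ * ‖α‖ := B.le_opNorm α
    have h2 : (1 + ‖B‖) * r = ρ := by rw [hr]; field_simp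
    nlinarith
  -- constants
  set c₁ : ℝ := 1 + ‖ε‖ * ‖Pt‖ with hc₁
  set c₂ : ℝ := (1 + ‖ε‖ * (K₂:ℝ)) * c₁ + ‖ε‖ * ‖Pt‖ with hc₂
  set C : ℝ := 1 + (‖ζ‖ * c₂ * D) * c₁ with hCdef
  have hεnn : (0:ℝ) ≤ ‖ε‖ := norm_nonneg _
  have hPtnn : (0:ℝ) ≤ ‖Pt‖ := norm_nonneg _
  have hζnn : (0:ℝ) ≤ ‖ζ‖ := ContinuousLinearMap.opNorm_nonneg ζ
  have hK₂nn : (0:ℝ) ≤ (K₂:ℝ) := K₂.coe_nonneg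
  have hDnn : (0:ℝ) ≤ D := by
    rw [hD]; have := norm_nonneg (fderiv ℝ Ψ 0); linarith
  have hc₁one : (1:ℝ) ≤ c₁ := by rw [hc₁]; nlinarith
  have hc₁nn : (0:ℝ) ≤ c₁ := by linarith
  have hc₂nn : (0:ℝ) ≤ c₂ := by
    rw [hc₂]
    have h1 : (0:ℝ) ≤ (1 + ‖ε‖ * (K₂:ℝ)) * c₁ :=
      mul_nonneg (by nlinarith) hc₁nn
    nlinarith
  have hCge : (1:ℝ) ≤ C := by
    rw [hCdef]
    have h1 : (0:ℝ) ≤ (‖ζ‖ * c₂ * D) * c₁ :=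
      mul_nonneg (mul_nonneg (mul_nonneg hζnn hc₂nn) hDnn) hc₁nn
    linarith
  refine ⟨V₀, C, Metric.isOpen_ball, Metric.mem_ball_self hrpos, ?_, ?_, hCge, ?_⟩
  · intro α hα
    exact (hρ α (by simpa [Metric.mem_ball, dist_zero_right] using (hball α hα).1)).1
  · intro α hα
    exact (hρ (ε (Pt α)) (by rw [Metric.mem_ball, dist_zero_right]; exact (hball α hα).2)).1
  intro α hα
  set β := ε (Pt α) with hβ
  set m := M (Ψ α) with hm
  have hmnn : (0:ℝ) ≤ ‖m‖ := norm_nonneg _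
  have hαball : α ∈ Metric.ball (0:Xt) ρ := by
    simpa [Metric.mem_ball, dist_zero_right] using (hball α hα).1
  have hβball : β ∈ Metric.ball (0:Xt) ρ := by
    rw [Metric.mem_ball, dist_zero_right]; exact (hball α hα).2
  have hαV₁ : α ∈ V₁ := (hρ α hαball).1
  have hsub : segment ℝ β α ⊆ Metric.ball (0:Xt) ρ :=
    (convex_ball (0:Xt) ρ).segment_subset hβball hαball
  -- ‖α - β‖ ≤ c₁ ‖m‖
  have hαβ : α - β = m - ε (N α) := by
    have h : m = (α - β) + ε (N α) := I1 α hαV₁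
    exact eq_sub_of_add_eq h.symm
  have hNα : ‖N α‖ ≤ ‖Pt‖ * ‖m‖ := Pt.le_opNorm m
  have hm1 : ‖α - β‖ ≤ c₁ * ‖m‖ := by
    rw [hαβ]
    have h1 : ‖m - ε (N α)‖ ≤ ‖m‖ + ‖ε (N α)‖ := norm_sub_le _ _
    have h2 : ‖ε (N α)‖ ≤ ‖ε‖ * ‖N α‖ := ε.le_opNorm _
    rw [hc₁]; nlinarith
  -- pointwise bounds on the segment
  have hseg : ∀ γ ∈ segment ℝ β α, γ ∈ V₁ ∧ ‖M (Ψ γ)‖ ≤ c₂ * ‖m‖ ∧ ‖fderiv ℝ Ψ γ‖ ≤ D := by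
    intro γ hγ
    have hγball := hsub hγ
    obtain ⟨hγV₁, hγt₂, hγD⟩ := hρ γ hγball
    refine ⟨hγV₁, ?_, hγD⟩
    obtain ⟨a, b, ha, hb, hab, hγeq⟩ := hγ
    have hBβ : B β = β := by
      show ε (Pt (ε (Pt α))) = ε (Pt α)
      rw [L1']
    have hBα : B α = β := rfl
    have hBγ : B γ = β := by
      rw [← hγeq, map_add, map_smul, map_smul, hBβ, hBα, ← add_smul, hab, one_smul]
    have hγB : γ - B γ = b • (α - β) := by
      rw [hBγ, ← hγeq]
      have hab' : a = 1 - b := by linarith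
      rw [hab', sub_smul, one_smul, smul_sub]
      abel
    have hγα : γ - α = a • (β - α) := by
      rw [← hγeq]
      have hab' : b = 1 - a := by linarith
      rw [hab', sub_smul, one_smul, smul_sub]
      abel
    have hb1 : b ≤ 1 := by linarith
    have ha1 : a ≤ 1 := by linarith
    have h1 : ‖γ - B γ‖ ≤ ‖α - β‖ := by
      rw [hγB, norm_smul, Real.norm_eq_abs, abs_of_nonneg hb]
      nlinarith [norm_nonneg (α - β)]
    have h2 : ‖γ - α‖ ≤ ‖α - β‖ := by
      rw [hγα, norm_smul, Real.norm_eq_abs, abs_of_nonneg ha, norm_sub_rev]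
      nlinarith [norm_nonneg (α - β)]
    have h3 : ‖N γ - N α‖ ≤ (K₂:ℝ) * ‖γ - α‖ := by
      have := hlip.dist_le_mul γ hγt₂ α (hρ α hαball).2.1
      simpa [dist_eq_norm] using this
    have h4 : ‖N γ‖ ≤ ‖N α‖ + (K₂:ℝ) * ‖γ - α‖ := by
      have := norm_sub_norm_le (N γ) (N α)
      linarith [norm_sub_rev (N γ) (N α) ▸ h3]
    have h5 : M (Ψ γ) = (γ - B γ) + ε (N γ) := I1 γ hγV₁
    have h6 : ‖M (Ψ γ)‖ ≤ ‖γ - B γ‖ + ‖ε‖ * ‖N γ‖ := by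
      rw [h5]
      have := norm_add_le (γ - B γ) (ε (N γ))
      have := ε.le_opNorm (N γ)
      linarith
    rw [hc₂]
    nlinarith [mul_le_mul_of_nonneg_left h4 hεnn, mul_le_mul_of_nonneg_left hNα hεnn,
      mul_le_mul_of_nonneg_left (h2.trans hm1) (mul_nonneg hεnn hK₂nn), h6, h1.trans hm1]
  -- mean value inequality
  have hder : ∀ γ ∈ segment ℝ β α, HasFDerivWithinAt (fun γ => E (Ψ γ))
      ((ζ (M (Ψ γ))).comp (fderiv ℝ Ψ γ)) (segment ℝ β α) γ := by
    intro γ hγ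
    obtain ⟨hγV₁, -, -⟩ := hseg γ hγ
    have hΨdiff : HasFDerivAt Ψ (fderiv ℝ Ψ γ) γ :=
      ((hΨV.differentiableOn one_ne_zero).differentiableAt (hV₁open.mem_nhds hγV₁)).hasFDerivAt
    have hEγ : HasFDerivAt E (ζ (M (Ψ γ))) (Ψ γ) := hEdiffAt (Ψ γ) (hΨU γ hγV₁)
    exact (hEγ.comp γ hΨdiff).hasFDerivWithinAt
  have hbound : ∀ γ ∈ segment ℝ β α,
      ‖(ζ (M (Ψ γ))).comp (fderiv ℝ Ψ γ)‖ ≤ ‖ζ‖ * c₂ * D * ‖m‖ := by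
    intro γ hγ
    obtain ⟨-, hb1, hb2⟩ := hseg γ hγ
    have h1 : ‖(ζ (M (Ψ γ))).comp (fderiv ℝ Ψ γ)‖ ≤ ‖ζ (M (Ψ γ))‖ * ‖fderiv ℝ Ψ γ‖ :=
      ContinuousLinearMap.opNorm_comp_le _ _
    have h2 : ‖ζ (M (Ψ γ))‖ ≤ ‖ζ‖ * ‖M (Ψ γ)‖ := ζ.le_opNorm _
    have h3 : (0:ℝ) ≤ ‖fderiv ℝ Ψ γ‖ := norm_nonneg _
    have h4 : (0:ℝ) ≤ ‖M (Ψ γ)‖ := norm_nonneg _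
    have h5 : (0:ℝ) ≤ ‖ζ (M (Ψ γ))‖ := norm_nonneg _
    have e1 : ‖ζ (M (Ψ γ))‖ * ‖fderiv ℝ Ψ γ‖ ≤ (‖ζ‖ * ‖M (Ψ γ)‖) * D :=
      mul_le_mul h2 hb2 h3 (mul_nonneg hζnn h4)
    have e2 : ‖ζ‖ * ‖M (Ψ γ)‖ ≤ ‖ζ‖ * (c₂ * ‖m‖) := mul_le_mul_of_nonneg_left hb1 hζnn
    have e3 : (‖ζ‖ * ‖M (Ψ γ)‖) * D ≤ (‖ζ‖ * (c₂ * ‖m‖)) * D :=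
      mul_le_mul_of_nonneg_right e2 hDnn
    nlinarith [e1, e3, h1]
  have hMVT : ‖E (Ψ α) - E (Ψ β)‖ ≤ (‖ζ‖ * c₂ * D * ‖m‖) * ‖α - β‖ :=
    (convex_segment β α).norm_image_sub_le_of_norm_hasFDerivWithin_le hder hbound
      (left_mem_segment ℝ β α) (right_mem_segment ℝ β α)
  have : |E (Ψ α) - E (Ψ β)| ≤ (‖ζ‖ * c₂ * D * ‖m‖) * ‖α - β‖ := by
    rwa [Real.norm_eq_abs] at hMVT
  calc |E (Ψ α) - E (Ψ β)| ≤ (‖ζ‖ * c₂ * D * ‖m‖) * ‖α - β‖ := this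
    _ ≤ C * ‖m‖ ^ 2 := by
      rw [hCdef]
      have hnn : (0:ℝ) ≤ ‖ζ‖ * c₂ * D * ‖m‖ :=
        mul_nonneg (mul_nonneg (mul_nonneg hζnn hc₂nn) hDnn) hmnn
      have e := mul_le_mul_of_nonneg_left hm1 hnn
      nlinarith [e, sq_nonneg ‖m‖, hmnn]
end
end

section
/- (Analyticity of the Lyapunov–Schmidt reduction.) In Setting (B), assume in addition that M : U → X̃ is real analytic, and let K, Π, Φ be as above. Then there exist open neighborhoods U₀ ⊆ U of x∞ and V₀ ⊆ X̃ of 0 and a map Ψ : V₀ → U₀ with Φ(Ψ(α)) = α for all α ∈ V₀ and Ψ(Φ(x)) = x for all x ∈ U₀, such that Ψ is real analytic on V₀; in particular, the Lyapunov–Schmidt reduction Γ : K ∩ V₀ → ℝ defined by Γ(α) := E(Ψ(α)) is real analytic on K ∩ V₀. -/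
open Function Set

noncomputable section

open Filter
open scoped Topology ENNReal NNReal


/-- Auxiliary: term-wise "integrated" power series. -/
noncomputable def integratedSeries {G : Type*} [NormedAddCommGroup G] [NormedSpace ℝ G]
    (gval : ℝ) (q : FormalMultilinearSeries ℝ G (G →L[ℝ] ℝ)) :
    FormalMultilinearSeries ℝ G ℝ
  | 0 => (continuousMultilinearCurryFin0 ℝ G ℝ).symm gval
  | (m + 1) => (((m : ℝ) + 1))⁻¹ •
      ((continuousMultilinearCurryRightEquiv' ℝ m G ℝ).symm (q m))

lemma integratedSeries_zero {G : Type*} [NormedAddCommGroup G] [NormedSpace ℝ G]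
    (gval : ℝ) (q : FormalMultilinearSeries ℝ G (G →L[ℝ] ℝ)) :
    integratedSeries gval q 0 = (continuousMultilinearCurryFin0 ℝ G ℝ).symm gval := rfl

lemma integratedSeries_succ {G : Type*} [NormedAddCommGroup G] [NormedSpace ℝ G]
    (gval : ℝ) (q : FormalMultilinearSeries ℝ G (G →L[ℝ] ℝ)) (m : ℕ) :
    integratedSeries gval q (m + 1) = (((m : ℝ) + 1))⁻¹ •
      ((continuousMultilinearCurryRightEquiv' ℝ m G ℝ).symm (q m)) := rfl

lemma analyticAt_of_hasFDerivAt {G : Type*} [NormedAddCommGroup G] [NormedSpace ℝ G]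
    {g : G → ℝ} {D : G → G →L[ℝ] ℝ} {α₀ : G}
    (hd : ∀ᶠ x in 𝓝 α₀, HasFDerivAt g (D x) x)
    (hD : AnalyticAt ℝ D α₀) : AnalyticAt ℝ g α₀ := by
  obtain ⟨q, r, hq⟩ := hD
  obtain ⟨δ, hδpos, hδ⟩ := EMetric.mem_nhds_iff.1 hd
  obtain ⟨t, ht0, htlt⟩ : ∃ t : ℝ≥0, 0 < t ∧ (t : ℝ≥0∞) < min r δ := by
    rcases ENNReal.lt_iff_exists_nnreal_btwn.1 (lt_min hq.r_pos hδpos) with ⟨t, h1, h2⟩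
    exact ⟨t, by exact_mod_cast h1, h2⟩
  have htr : (t : ℝ≥0∞) < r := htlt.trans_le (min_le_left _ _)
  have htδ : (t : ℝ≥0∞) < δ := htlt.trans_le (min_le_right _ _)
  set p : FormalMultilinearSeries ℝ G ℝ := integratedSeries (g α₀) q with hpdef
  have hnorm : ∀ m, ‖p (m + 1)‖ ≤ ‖q m‖ := by
    intro m
    have h1 : ‖p (m+1)‖ ≤ ‖(((m : ℝ) + 1))⁻¹‖ *
        ‖(continuousMultilinearCurryRightEquiv' ℝ m G ℝ).symm (q m)‖ := by
      rw [hpdef, integratedSeries_succ]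
      exact norm_smul_le (((m : ℝ) + 1))⁻¹
        ((continuousMultilinearCurryRightEquiv' ℝ m G ℝ).symm (q m))
    have h2 : ‖(continuousMultilinearCurryRightEquiv' ℝ m G ℝ).symm (q m)‖ = ‖q m‖ :=
      LinearIsometryEquiv.norm_map _ _
    have h3 : ‖(((m : ℝ) + 1))⁻¹‖ ≤ 1 := by
      rw [Real.norm_eq_abs, abs_of_nonneg (by positivity)]
      rw [inv_le_one_iff₀]
      right; linarith [Nat.cast_nonneg (α := ℝ) m]
    calc ‖p (m+1)‖ ≤ _ * _ := h1
    _ ≤ 1 * ‖q m‖ := by rw [h2]; exact mul_le_mul_of_nonneg_right h3 (norm_nonneg _)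
    _ = ‖q m‖ := one_mul _
  -- radius bound
  have hqsum : Summable fun n => ‖q n‖ * (t : ℝ) ^ n :=
    q.summable_norm_mul_pow (htr.trans_le hq.r_le)
  have hpsum : Summable fun n => ‖p n‖ * (t : ℝ) ^ n := by
    rw [← summable_nat_add_iff 1]
    refine Summable.of_nonneg_of_le (fun n => by positivity) (fun n => ?_)
      (hqsum.mul_right (t : ℝ))
    calc ‖p (n + 1)‖ * (t : ℝ) ^ (n + 1) = (‖p (n+1)‖ * (t:ℝ)^n) * t := by ring
    _ ≤ (‖q n‖ * (t:ℝ)^n) * t := by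
        apply mul_le_mul_of_nonneg_right _ t.coe_nonneg
        exact mul_le_mul_of_nonneg_right (hnorm n) (by positivity)
  have hrad : (t : ℝ≥0∞) ≤ p.radius := p.le_radius_of_summable hpsum
  refine ⟨p, t, hrad, by exact_mod_cast ht0, fun {y} hy => ?_⟩
  -- basic facts about y
  have hynorm : (‖y‖₊ : ℝ≥0∞) < (t : ℝ≥0∞) := by
    rw [Metric.mem_eball, edist_zero_right, enorm_eq_nnnorm] at hy; exact hy
  set c : ℕ → ℝ := fun n => q n (fun _ => y) y with hcdef
  -- derivative along the segment
  have hseg : ∀ s : ℝ, |s| ≤ 1 →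
      HasDerivAt (fun u : ℝ => g (α₀ + u • y)) (D (α₀ + s • y) y) s := by
    intro s hs
    have hmem : α₀ + s • y ∈ Metric.eball α₀ δ := by
      rw [Metric.mem_eball, edist_eq_enorm_sub, enorm_eq_nnnorm]
      have : α₀ + s • y - α₀ = s • y := by abel
      rw [this]
      refine lt_of_le_of_lt ?_ (hynorm.trans htδ)
      rw [ENNReal.coe_le_coe, nnnorm_smul]
      calc ‖s‖₊ * ‖y‖₊ ≤ 1 * ‖y‖₊ := by
            apply mul_le_mul_of_nonneg_right _ zero_le
            simpa [← NNReal.coe_le_coe] using hs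
      _ = ‖y‖₊ := one_mul _
    have hder : HasFDerivAt g (D (α₀ + s • y)) (α₀ + s • y) := hδ hmem
    have hline : HasDerivAt (fun u : ℝ => α₀ + u • y) y s := by
      simpa using ((hasDerivAt_id s).smul_const y).const_add α₀
    exact hder.comp_hasDerivAt s hline
  -- FTC
  have hmapr : ∀ s : ℝ, |s| ≤ 1 → α₀ + s • y ∈ Metric.eball α₀ r := by
    intro s hs
    rw [Metric.mem_eball, edist_eq_enorm_sub, enorm_eq_nnnorm]
    have : α₀ + s • y - α₀ = s • y := by abel
    rw [this]
    refine lt_of_le_of_lt ?_ (hynorm.trans htr)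
    rw [ENNReal.coe_le_coe, nnnorm_smul]
    calc ‖s‖₊ * ‖y‖₊ ≤ 1 * ‖y‖₊ := by
          apply mul_le_mul_of_nonneg_right _ zero_le
          simpa [← NNReal.coe_le_coe] using hs
    _ = ‖y‖₊ := one_mul _
  have habs : ∀ s ∈ uIcc (0:ℝ) 1, |s| ≤ 1 := by
    intro s hs
    rw [uIcc_of_le zero_le_one] at hs
    rw [abs_of_nonneg hs.1]; exact hs.2
  have hcont : ContinuousOn (fun s : ℝ => D (α₀ + s • y) y) (uIcc (0:ℝ) 1) := by
    have h1 : ContinuousOn (fun s : ℝ => D (α₀ + s • y)) (uIcc (0:ℝ) 1) := by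
      apply hq.continuousOn.comp
      · exact (continuous_const.add (continuous_id.smul continuous_const)).continuousOn
      · intro s hs; exact hmapr s (habs s hs)
    exact h1.clm_apply continuousOn_const
  have hFTC : ∫ s in (0:ℝ)..1, D (α₀ + s • y) y = g (α₀ + y) - g α₀ := by
    have := intervalIntegral.integral_eq_sub_of_hasDerivAt
      (f := fun u : ℝ => g (α₀ + u • y)) (f' := fun s => D (α₀ + s • y) y)
      (fun s hs => hseg s (habs s hs)) hcont.intervalIntegrable
    simpa using this
  -- pointwise HasSum on the segment
  have hsums : ∀ s : ℝ, |s| ≤ 1 →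
      HasSum (fun n => s ^ n * c n) (D (α₀ + s • y) y) := by
    intro s hs
    have hmem : s • y ∈ Metric.eball (0 : G) r := by
      rw [Metric.mem_eball, edist_eq_enorm_sub, enorm_eq_nnnorm, sub_zero]
      have := hmapr s hs
      rw [Metric.mem_eball, edist_eq_enorm_sub, enorm_eq_nnnorm] at this
      simpa using this
    have h0 : HasSum (fun n => q n fun _ => s • y) (D (α₀ + s • y)) := hq.hasSum hmem
    have h1 : HasSum (fun n => (q n fun _ => s • y) y) (D (α₀ + s • y) y) :=
      (ContinuousLinearMap.apply ℝ ℝ y).hasSum h0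
    have h2 : ∀ n, (q n fun _ => s • y) y = s ^ n * c n := by
      intro n
      have : (q n fun _ => s • y) = (∏ _i : Fin n, s) • q n (fun _ => y) := by
        rw [← ContinuousMultilinearMap.map_smul_univ]
      rw [this, Finset.prod_const, Finset.card_univ, Fintype.card_fin]
      simp [hcdef, mul_comm]
    simpa [h2] using h1
  -- dominated convergence to swap sum and integral
  have hbsum : Summable fun n => ‖q n‖ * ‖y‖ ^ n * ‖y‖ := by
    have : Summable fun n => ‖q n‖ * ((‖y‖₊ : ℝ)) ^ n :=
      q.summable_norm_mul_pow ((hynorm.trans htr).trans_le hq.r_le)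
    simpa [coe_nnnorm] using this.mul_right ‖y‖
  have hswap : HasSum (fun n => ∫ s in (0:ℝ)..1, s ^ n * c n)
      (∫ s in (0:ℝ)..1, D (α₀ + s • y) y) := by
    apply intervalIntegral.hasSum_integral_of_dominated_convergence
      (bound := fun n _ => ‖q n‖ * ‖y‖ ^ n * ‖y‖)
    · intro n
      exact ((continuous_pow n).mul continuous_const).aestronglyMeasurable
    · intro n
      filter_upwards with s hs
      have hs1 : |s| ≤ 1 := by
        rw [uIoc_of_le zero_le_one] at hs
        rw [abs_of_nonneg hs.1.le]; exact hs.2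
      have hc : |c n| ≤ ‖q n‖ * ‖y‖ ^ n * ‖y‖ := by
        have h1 : ‖q n (fun _ => y) y‖ ≤ ‖q n (fun _ => y)‖ * ‖y‖ :=
          (q n (fun _ => y)).le_opNorm y
        have h2 : ‖q n (fun _ => y)‖ ≤ ‖q n‖ * ∏ _i : Fin n, ‖y‖ :=
          (q n).le_opNorm _
        rw [Finset.prod_const, Finset.card_univ, Fintype.card_fin] at h2
        calc |c n| ≤ ‖q n (fun _ => y)‖ * ‖y‖ := h1
        _ ≤ (‖q n‖ * ‖y‖ ^ n) * ‖y‖ := mul_le_mul_of_nonneg_right h2 (norm_nonneg _)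
      calc ‖s ^ n * c n‖ = |s| ^ n * |c n| := by
            rw [norm_mul, Real.norm_eq_abs, Real.norm_eq_abs, abs_pow]
      _ ≤ 1 * |c n| := by
            apply mul_le_mul_of_nonneg_right _ (abs_nonneg _)
            exact pow_le_one₀ (abs_nonneg _) hs1
      _ = |c n| := one_mul _
      _ ≤ _ := hc
    · filter_upwards with s _; exact hbsum
    · exact intervalIntegrable_const
    · filter_upwards with s hs
      have hs1 : |s| ≤ 1 := by
        rw [uIoc_of_le zero_le_one] at hs
        rw [abs_of_nonneg hs.1.le]; exact hs.2
      exact hsums s hs1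
  have hint : ∀ n : ℕ, (∫ s in (0:ℝ)..1, s ^ n * c n) = ((n : ℝ) + 1)⁻¹ * c n := by
    intro n
    rw [intervalIntegral.integral_mul_const, integral_pow]
    simp [div_eq_mul_inv, mul_comm]
  have hdiag : ∀ n : ℕ, p (n + 1) (fun _ => y) = ((n : ℝ) + 1)⁻¹ * c n := by
    intro n
    have hsy : ((continuousMultilinearCurryRightEquiv' ℝ n G ℝ).symm (q n))
        (fun _ => y) = c n := by
      rw [continuousMultilinearCurryRightEquiv_symm_apply']
      rfl
    rw [hpdef, integratedSeries_succ, ContinuousMultilinearMap.smul_apply, hsy, smul_eq_mul]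
  have h5 : HasSum (fun n => p (n + 1) (fun _ => y)) (g (α₀ + y) - g α₀) := by
    rw [← hFTC]
    have : (fun n => p (n + 1) (fun _ => y)) = fun n => ∫ s in (0:ℝ)..1, s ^ n * c n := by
      funext n; rw [hdiag n, hint n]
    rw [this]
    exact hswap
  have h6 := (hasSum_nat_add_iff (f := fun n => p n (fun _ => y)) 1).1 h5
  have h7 : p 0 (fun _ => y) = g α₀ := by
    rw [hpdef, integratedSeries_zero]
    simp
  simpa [h7] using h6


set_option maxHeartbeats 2000000

/-- Analyticity of the Lyapunov–Schmidt reduction (Setting (B), `M` real analytic):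
the local inverse `Ψ` of `Φ x = M x + Π (x - x_inf)` is real analytic, and in particular
the Lyapunov–Schmidt reduction `Γ (α) = E (Ψ α)` is real analytic on `K ∩ V₀`. -/
theorem analyticity_lyapunov_schmidt_reduction
    {X Xt : Type*} [NormedAddCommGroup X] [NormedSpace ℝ X] [CompleteSpace X]
    [NormedAddCommGroup Xt] [NormedSpace ℝ Xt] [CompleteSpace Xt]
    -- Setting (B)
    (ε : X →L[ℝ] Xt) (hε : Function.Injective ε)
    (ζ : Xt →L[ℝ] StrongDual ℝ X) (hζ : Function.Injective ζ)
    (hdef : ∀ x : X, x ≠ 0 → ζ (ε x) x ≠ 0)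
    (U : Set X) (hU : IsOpen U)
    (E : X → ℝ) (hE : ContDiffOn ℝ 2 E U)
    (M : X → Xt) (hMC1 : ContDiffOn ℝ 1 M U)
    (hgrad : ∀ x ∈ U, ∀ v : X, fderiv ℝ E x v = ζ (M x) v)
    (x_inf : X) (hx : x_inf ∈ U) (hMcrit : M x_inf = 0)
    (hFred : FredholmIndexZero (fderiv ℝ M x_inf))
    -- additional hypothesis: M is real analytic
    (hMan : AnalyticOnNhd ℝ M U)
    -- K = ker M'(x_inf); Π : X* → X* a continuous projection with range j(K),
    -- inducing Pt : X̃ → X.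
    (Pd : StrongDual ℝ X →L[ℝ] StrongDual ℝ X)
    (hPd_idem : Pd.comp Pd = Pd)
    (hPd_range : LinearMap.range (Pd : StrongDual ℝ X →ₗ[ℝ] StrongDual ℝ X)
      = Submodule.map ((ζ.comp ε : X →L[ℝ] StrongDual ℝ X) : X →ₗ[ℝ] StrongDual ℝ X) (LinearMap.ker (fderiv ℝ M x_inf : X →ₗ[ℝ] Xt)))
    (Pt : Xt →L[ℝ] X)
    (hPt_mem : ∀ y : Xt, Pt y ∈ LinearMap.ker (fderiv ℝ M x_inf : X →ₗ[ℝ] Xt))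
    (hPt_compat : ∀ y : Xt, ζ (ε (Pt y)) = Pd (ζ y)) :
    ∃ (U₀ : Set X) (V₀ : Set Xt) (Ψ : Xt → X),
      IsOpen U₀ ∧ x_inf ∈ U₀ ∧ U₀ ⊆ U ∧ IsOpen V₀ ∧ (0 : Xt) ∈ V₀ ∧
      MapsTo Ψ V₀ U₀ ∧
      (∀ α ∈ V₀, M (Ψ α) + ε (Pt (ε (Ψ α - x_inf))) = α) ∧
      (∀ x ∈ U₀, Ψ (M x + ε (Pt (ε (x - x_inf)))) = x) ∧
      AnalyticOnNhd ℝ Ψ V₀ ∧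
      AnalyticOnNhd ℝ
        (fun k : LinearMap.ker (fderiv ℝ M x_inf : X →ₗ[ℝ] Xt) => E (Ψ (ε (k : X))))
        {k : LinearMap.ker (fderiv ℝ M x_inf : X →ₗ[ℝ] Xt) | ε (k : X) ∈ V₀} := by
  
  classical
  set A : X →L[ℝ] Xt := fderiv ℝ M x_inf with hAdef
  set Qc : X →L[ℝ] Xt := ε.comp (Pt.comp ε) with hQdef
  set Φ : X → Xt := fun x => M x + ε (Pt (ε (x - x_inf))) with hΦdef
  have hMdiff : HasFDerivAt M A x_inf := (hMan x_inf hx).differentiableAt.hasFDerivAt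
  -- symmetry of the second derivative pairing
  have hsymm : ∀ u v : X, ζ (A u) v = ζ (A v) u := by
    have hsnd : IsSymmSndFDerivAt ℝ E x_inf :=
      (hE.contDiffAt (hU.mem_nhds hx)).isSymmSndFDerivAt (by simp)
    have hev : (fun x => fderiv ℝ E x) =ᶠ[𝓝 x_inf] fun x => ζ (M x) := by
      filter_upwards [hU.mem_nhds hx] with x hxU
      exact ContinuousLinearMap.ext fun v => hgrad x hxU v
    have hder2 : fderiv ℝ (fun x => ζ (M x)) x_inf = ζ.comp A :=
      (ζ.hasFDerivAt.comp x_inf hMdiff).fderiv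
    have heq : fderiv ℝ (fderiv ℝ E) x_inf = ζ.comp A := by
      rw [hev.fderiv_eq, hder2]
    intro u v
    have h := hsnd.eq u v
    rw [heq] at h
    simpa using h
  -- Pt ∘ ε is the identity on the kernel
  have hPtK : ∀ k : X, k ∈ LinearMap.ker (A : X →ₗ[ℝ] Xt) → Pt (ε k) = k := by
    intro k hk
    have h2 : ζ (ε k) ∈ LinearMap.range (Pd : StrongDual ℝ X →ₗ[ℝ] StrongDual ℝ X) := by
      rw [hPd_range]; exact Submodule.mem_map.2 ⟨k, hk, rfl⟩
    obtain ⟨w, hw⟩ := h2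
    have h3 : Pd (ζ (ε k)) = ζ (ε k) := by
      rw [← hw]; show Pd (Pd w) = Pd w; rw [← ContinuousLinearMap.comp_apply, hPd_idem]
    have h4 : ζ (ε (Pt (ε k))) = ζ (ε k) := by rw [hPt_compat, h3]
    exact hε (hζ h4)
  -- range of A annihilates the kernel
  have hpair : ∀ k ∈ LinearMap.ker (A : X →ₗ[ℝ] Xt), ∀ x : X, ζ (A x) k = 0 := by
    intro k hk x
    rw [hsymm x k, show A k = 0 from LinearMap.mem_ker.1 hk]
    simp
  have hker0 : ∀ k ∈ LinearMap.ker (A : X →ₗ[ℝ] Xt), ε k ∈ LinearMap.range (A : X →ₗ[ℝ] Xt) → k = 0 := by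
    rintro k hk ⟨x, hxk⟩
    by_contra hne
    apply hdef k hne
    rw [← hxk]
    exact hpair k hk x
  -- injectivity of L := A + Qc
  set L : X →L[ℝ] Xt := A + Qc with hLdef
  have hLinj : ∀ x : X, L x = 0 → x = 0 := by
    intro x hx0
    have hx0' : A x + ε (Pt (ε x)) = 0 := by
      simpa [hLdef, hQdef] using hx0
    have hk : Pt (ε x) ∈ LinearMap.ker (A : X →ₗ[ℝ] Xt) := hPt_mem (ε x)
    have h1 : ζ (ε (Pt (ε x))) (Pt (ε x)) = 0 := by
      have h2 := congrArg (fun z => ζ z (Pt (ε x))) hx0'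
      simp only [map_add, ContinuousLinearMap.add_apply, map_zero,
        ContinuousLinearMap.zero_apply] at h2
      rw [hpair _ hk x] at h2
      linarith
    have hk0 : Pt (ε x) = 0 := by
      by_contra hne; exact hdef _ hne h1
    have hAx : A x = 0 := by
      rw [hk0] at hx0'; simpa using hx0'
    have hxK : x ∈ LinearMap.ker (A : X →ₗ[ℝ] Xt) := LinearMap.mem_ker.2 hAx
    rw [← hPtK x hxK, hk0]
  -- surjectivity of L
  haveI hKfin : FiniteDimensional ℝ (LinearMap.ker (A : X →ₗ[ℝ] Xt)) := hFred.1
  haveI hQfin : FiniteDimensional ℝ (Xt ⧸ LinearMap.range (A : X →ₗ[ℝ] Xt)) := hFred.2.2.1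
  have hrank : Module.finrank ℝ (LinearMap.ker (A : X →ₗ[ℝ] Xt))
      = Module.finrank ℝ (Xt ⧸ LinearMap.range (A : X →ₗ[ℝ] Xt)) := hFred.2.2.2
  set φ : (LinearMap.ker (A : X →ₗ[ℝ] Xt)) →ₗ[ℝ] (Xt ⧸ LinearMap.range (A : X →ₗ[ℝ] Xt)) :=
    (LinearMap.range (A : X →ₗ[ℝ] Xt)).mkQ.comp ((ε : X →ₗ[ℝ] Xt).comp (LinearMap.ker (A : X →ₗ[ℝ] Xt)).subtype) with hφdef
  have hφker : ∀ a : LinearMap.ker (A : X →ₗ[ℝ] Xt), φ a = 0 → a = 0 := by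
    intro a ha
    have h1 : ε (a : X) ∈ LinearMap.range (A : X →ₗ[ℝ] Xt) := by
      rw [← Submodule.Quotient.mk_eq_zero]
      simpa [hφdef, Submodule.mkQ_apply] using ha
    exact Subtype.ext (hker0 _ a.2 h1)
  have hφinj : Function.Injective φ :=
    LinearMap.ker_eq_bot.1 (LinearMap.ker_eq_bot'.2 hφker)
  have hφsurj : Function.Surjective φ :=
    (LinearMap.injective_iff_surjective_of_finrank_eq_finrank hrank).1 hφinj
  have hLsurj : ∀ y : Xt, ∃ x : X, L x = y := by
    intro y
    obtain ⟨a, ha⟩ := hφsurj ((LinearMap.range (A : X →ₗ[ℝ] Xt)).mkQ y)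
    have h1 : y - ε (a : X) ∈ LinearMap.range (A : X →ₗ[ℝ] Xt) := by
      have h2 : ε (a : X) - y ∈ LinearMap.range (A : X →ₗ[ℝ] Xt) := by
        rw [← Submodule.Quotient.eq]
        simpa [hφdef, Submodule.mkQ_apply] using ha
      have := (LinearMap.range (A : X →ₗ[ℝ] Xt)).neg_mem h2
      simpa using this
    obtain ⟨x, hxa⟩ := h1
    set cc : X := (a : X) - Pt (ε x) with hccdef
    have hc : cc ∈ LinearMap.ker (A : X →ₗ[ℝ] Xt) := Submodule.sub_mem _ a.2 (hPt_mem (ε x))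
    refine ⟨x + cc, ?_⟩
    have hexp : L (x + cc) = A x + A cc + (ε (Pt (ε x)) + ε (Pt (ε cc))) := by
      simp [hLdef, hQdef, map_add]
      abel
    rw [hexp, show A cc = 0 from LinearMap.mem_ker.1 hc, hPtK cc hc, hccdef, show A x = y - ε ↑a from hxa]
    simp only [map_sub, add_zero]
    abel
  have hkerL : LinearMap.ker (L : X →ₗ[ℝ] Xt) = ⊥ := LinearMap.ker_eq_bot'.2 hLinj
  have hranL : LinearMap.range (L : X →ₗ[ℝ] Xt) = ⊤ := LinearMap.range_eq_top.2 hLsurj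
  set L' : X ≃L[ℝ] Xt := ContinuousLinearEquiv.ofBijective L hkerL hranL with hL'def
  have hL'coe : (L' : X →L[ℝ] Xt) = L := by
    ext v; rfl
  -- analyticity of Φ
  have hQan : ∀ x : X, AnalyticAt ℝ (fun z : X => ε (Pt (ε (z - x_inf)))) x := by
    intro x
    have h1 : AnalyticAt ℝ (fun z : X => z - x_inf) x := analyticAt_id.sub analyticAt_const
    exact (Qc.analyticAt _).comp h1
  have hΦan : AnalyticOnNhd ℝ Φ U := fun x hxU => (hMan x hxU).add (hQan x)
  -- strict derivative of Φ at x_inf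
  have hQder : HasFDerivAt (fun z : X => ε (Pt (ε (z - x_inf)))) Qc x_inf := by
    have h1 : HasFDerivAt (fun z : X => z - x_inf) (ContinuousLinearMap.id ℝ X) x_inf :=
      (hasFDerivAt_id x_inf).sub_const x_inf
    have h2 := Qc.hasFDerivAt.comp x_inf h1
    rw [ContinuousLinearMap.comp_id] at h2
    exact h2
  have hΦder : HasFDerivAt Φ L x_inf := hMdiff.add hQder
  have hΦfder : fderiv ℝ Φ x_inf = L := hΦder.fderiv
  have hΦstrict : HasStrictFDerivAt Φ (L' : X →L[ℝ] Xt) x_inf := by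
    have h := (hΦan x_inf hx).hasStrictFDerivAt
    rw [hΦfder] at h
    rwa [hL'coe]
  set f := hΦstrict.toOpenPartialHomeomorph Φ with hfdef
  have hfcoe : ⇑f = Φ := hΦstrict.toOpenPartialHomeomorph_coe
  have hfsource : x_inf ∈ f.source := hΦstrict.mem_toOpenPartialHomeomorph_source
  -- the good open set
  have hfderan : AnalyticOnNhd ℝ (fderiv ℝ Φ) U := hΦan.fderiv
  have hfdercont : ContinuousOn (fderiv ℝ Φ) (U ∩ f.source) :=
    hfderan.continuousOn.mono inter_subset_left
  set Einv : Set (X →L[ℝ] Xt) := Set.range ((↑) : (X ≃L[ℝ] Xt) → X →L[ℝ] Xt) with hEdef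
  have hEopen : IsOpen Einv := ContinuousLinearEquiv.isOpen
  set U₀ : Set X := (U ∩ f.source) ∩ fderiv ℝ Φ ⁻¹' Einv with hU₀def
  have hU₀open : IsOpen U₀ :=
    hfdercont.isOpen_inter_preimage (hU.inter f.open_source) hEopen
  have hxU₀ : x_inf ∈ U₀ := by
    refine ⟨⟨hx, hfsource⟩, ?_⟩
    rw [mem_preimage, hΦfder, ← hL'coe]
    exact mem_range_self L'
  set V₀ : Set Xt := Φ '' U₀ with hV₀def
  have hV₀open : IsOpen V₀ := by
    rw [hV₀def, ← hfcoe]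
    exact f.isOpen_image_of_subset_source hU₀open (fun z hz => hz.1.2)
  have hΨmaps : MapsTo (⇑f.symm) V₀ U₀ := by
    rintro α ⟨a, ha, rfl⟩
    have h1 : f.symm (Φ a) = a := by
      rw [← hfcoe]; exact f.left_inv ha.1.2
    rw [h1]; exact ha
  have hright : ∀ α ∈ V₀, Φ (f.symm α) = α := by
    rintro α ⟨a, ha, rfl⟩
    rw [← hfcoe, f.left_inv ha.1.2]
  have hleft : ∀ z ∈ U₀, f.symm (Φ z) = z := by
    intro z hz; rw [← hfcoe]; exact f.left_inv hz.1.2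
  have hΦx_inf : Φ x_inf = 0 := by
    rw [hΦdef]; simp [hMcrit]
  have h0V₀ : (0 : Xt) ∈ V₀ := ⟨x_inf, hxU₀, hΦx_inf⟩
  -- analyticity of the local inverse
  have hΨan : AnalyticOnNhd ℝ (⇑f.symm) V₀ := by
    rintro α ⟨a, ha, rfl⟩
    obtain ⟨e, he⟩ := ha.2
    have hana : AnalyticAt ℝ (⇑f) a := by
      rw [hfcoe]; exact hΦan a ha.1.1
    have hfder : fderiv ℝ (⇑f) a = (e : X →L[ℝ] Xt) := by rw [hfcoe, he]
    have h := f.analyticAt_symm' ha.1.2 hana hfder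
    rwa [hfcoe] at h
  -- analyticity of E ∘ Ψ
  have hEP : ∀ z ∈ U₀, fderiv ℝ E z = ζ (M z) := fun z hz =>
    ContinuousLinearMap.ext fun v => hgrad z hz.1.1 v
  have hMΨ : ∀ α ∈ V₀, M (f.symm α) = α - ε (Pt (ε (f.symm α - x_inf))) := by
    intro α hα
    have h := hright α hα
    rw [hΦdef] at h
    simp only at h
    exact eq_sub_of_add_eq h
  have hDan : AnalyticOnNhd ℝ (fun α =>
      (ζ (α - ε (Pt (ε (f.symm α - x_inf))))).comp (fderiv ℝ (⇑f.symm) α)) V₀ := by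
    intro α hα
    have hβ : AnalyticAt ℝ (fun β : Xt => β - ε (Pt (ε (f.symm β - x_inf)))) α := by
      have hsub : AnalyticAt ℝ (fun β : Xt => ε (Pt (ε (f.symm β - x_inf)))) α :=
        (Qc.analyticAt _).comp ((hΨan α hα).sub analyticAt_const)
      exact analyticAt_id.sub hsub
    have h1 : AnalyticAt ℝ (fun β : Xt => ζ (β - ε (Pt (ε (f.symm β - x_inf))))) α :=
      (ζ.analyticAt _).comp hβ
    have h2 : AnalyticAt ℝ (fderiv ℝ (⇑f.symm)) α := hΨan.fderiv α hα
    exact ((ContinuousLinearMap.compL ℝ Xt X ℝ).analyticAt_bilinear _).comp₂ h1 h2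
  have hgan : AnalyticOnNhd ℝ (fun α => E (f.symm α)) V₀ := by
    intro α₀ hα₀
    apply analyticAt_of_hasFDerivAt (D := fun α =>
      (ζ (α - ε (Pt (ε (f.symm α - x_inf))))).comp (fderiv ℝ (⇑f.symm) α))
    · filter_upwards [hV₀open.mem_nhds hα₀] with α hα
      have hz0 : f.symm α ∈ U₀ := hΨmaps hα
      have hzU : f.symm α ∈ U := hz0.1.1
      have hdE : HasFDerivAt E (ζ (M (f.symm α))) (f.symm α) := by
        have hdiff : DifferentiableAt ℝ E (f.symm α) :=
          (hE.contDiffAt (hU.mem_nhds hzU)).differentiableAt (by norm_num)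
        have h := hdiff.hasFDerivAt
        rwa [hEP _ hz0] at h
      have hdΨ : HasFDerivAt (⇑f.symm) (fderiv ℝ (⇑f.symm) α) α :=
        (hΨan α hα).differentiableAt.hasFDerivAt
      have hcomp := hdE.comp α hdΨ
      rw [hMΨ α hα] at hcomp
      exact hcomp
    · exact hDan α₀ hα₀
  refine ⟨U₀, V₀, ⇑f.symm, hU₀open, hxU₀, fun z hz => hz.1.1, hV₀open, h0V₀, hΨmaps,
    ?_, ?_, hΨan, ?_⟩
  · intro α hα
    have h := hright α hα
    rw [hΦdef] at h
    simpa using h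
  · intro z hz
    have h := hleft z hz
    rw [hΦdef] at h
    simpa using h
  · intro k hk
    have hι : AnalyticAt ℝ (fun k : LinearMap.ker (A : X →ₗ[ℝ] Xt) => ε (k : X)) k :=
      (ε.comp (LinearMap.ker (A : X →ₗ[ℝ] Xt)).subtypeL).analyticAt k
    exact AnalyticAt.comp (f := fun k : LinearMap.ker (A : X →ₗ[ℝ] Xt) => ε (k : X)) (hgan _ hk) hι
end
end

section
/- (Analytic gradient maps have analytic potentials.) Let X and Y be Banach spaces, let ι : Y → X* be a continuous linear embedding, let U ⊆ X be open, let E : U → ℝ be Fréchet differentiable, and let M : U → Y be a real analytic map such that E′(x)(v) = (ι(M(x)))(v) for all x ∈ U and v ∈ X (i.e., M is a gradient map for E). Then E is real analytic on U. -/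
open Function Set

noncomputable section

set_option maxHeartbeats 2000000 in
open MeasureTheory in
theorem analytic_of_hasFDerivAt_analytic
    {X : Type*} [NormedAddCommGroup X] [NormedSpace ℝ X] [CompleteSpace X]
    {E : X → ℝ} {D : X → X →L[ℝ] ℝ} {U : Set X} (hU : IsOpen U)
    (hE : ∀ x ∈ U, HasFDerivAt E (D x) x) (hD : AnalyticOnNhd ℝ D U) :
    AnalyticOnNhd ℝ E U := by
  intro x₀ hx₀
  obtain ⟨p, r, hp⟩ := hD x₀ hx₀
  obtain ⟨ε, εpos, hball⟩ := Metric.isOpen_iff.1 hU x₀ hx₀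
  obtain ⟨c, hc0, hcr⟩ := ENNReal.lt_iff_exists_nnreal_btwn.1 hp.r_pos
  have hc0' : 0 < c := by exact_mod_cast hc0
  set ρ : NNReal := min c ε.toNNReal with hρ
  have hρ0 : 0 < ρ := lt_min hc0' (Real.toNNReal_pos.2 εpos)
  have hρr : (ρ : ENNReal) < r := lt_of_le_of_lt (by exact_mod_cast min_le_left _ _) hcr
  have hρε : (ρ : ℝ) ≤ ε := by
    have : ρ ≤ ε.toNNReal := min_le_right _ _
    calc (ρ:ℝ) ≤ (ε.toNNReal : ℝ) := by exact_mod_cast this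
    _ = ε := Real.coe_toNNReal _ εpos.le
  -- the candidate power series for E
  set q : FormalMultilinearSeries ℝ X ℝ := fun n =>
    Nat.rec ((continuousMultilinearCurryFin0 ℝ X ℝ).symm (E x₀))
      (fun m _ => ((m : ℝ) + 1)⁻¹ • (continuousMultilinearCurryRightEquiv' ℝ m X ℝ).symm (p m)) n
    with hq
  have hq0 : q 0 = (continuousMultilinearCurryFin0 ℝ X ℝ).symm (E x₀) := rfl
  have hqs : ∀ n, q (n + 1) =
      ((n : ℝ) + 1)⁻¹ • (continuousMultilinearCurryRightEquiv' ℝ n X ℝ).symm (p n) := fun n => rfl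
  have hqnorm : ∀ n, ‖q (n + 1)‖ ≤ ‖p n‖ := by
    intro n
    rw [hqs n]
    have h1 : ‖((n : ℝ) + 1)⁻¹‖ ≤ 1 := by
      rw [Real.norm_eq_abs, abs_of_nonneg (by positivity), inv_le_one_iff₀]
      right; linarith [Nat.cast_nonneg (α := ℝ) n]
    calc ‖((n : ℝ) + 1)⁻¹ • (continuousMultilinearCurryRightEquiv' ℝ n X ℝ).symm (p n)‖
        ≤ ‖((n : ℝ) + 1)⁻¹‖ * ‖(continuousMultilinearCurryRightEquiv' ℝ n X ℝ).symm (p n)‖ :=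
          ContinuousMultilinearMap.opNorm_smul_le _ _
      _ ≤ 1 * ‖p n‖ := by
          rw [LinearIsometryEquiv.norm_map]
          exact mul_le_mul_of_nonneg_right h1 (by positivity)
      _ = ‖p n‖ := one_mul _
  refine ⟨q, ρ, ?_, ?_, ?_⟩
  · -- radius bound
    apply ENNReal.le_of_forall_nnreal_lt
    intro a ha
    have har : (a : ENNReal) < p.radius := lt_of_lt_of_le (ha.trans hρr) hp.r_le
    have hsum : Summable fun n => ‖p n‖ * (a : ℝ) ^ n := p.summable_norm_mul_pow har
    apply q.le_radius_of_summable_norm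
    rw [← summable_nat_add_iff 1]
    refine Summable.of_nonneg_of_le (fun n => by positivity) (fun n => ?_)
      (hsum.mul_left ((a : ℝ)))
    calc ‖q (n + 1)‖ * (a : ℝ) ^ (n + 1) ≤ ‖p n‖ * (a : ℝ) ^ (n + 1) :=
          mul_le_mul_of_nonneg_right (hqnorm n) (by positivity)
      _ = (a : ℝ) * (‖p n‖ * (a : ℝ) ^ n) := by ring
  · exact_mod_cast hρ0
  · -- the sum formula
    intro y hy
    rw [EMetric.mem_ball, edist_zero_right] at hy
    have hynorm : ‖y‖ < (ρ : ℝ) := by exact_mod_cast hy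
    have hyr : ∀ t : ℝ, t ∈ Icc (0:ℝ) 1 → ‖t • y‖ < (ρ : ℝ) := by
      intro t ht
      rw [norm_smul]
      calc ‖t‖ * ‖y‖ ≤ 1 * ‖y‖ := by
            apply mul_le_mul_of_nonneg_right _ (norm_nonneg _)
            rw [Real.norm_eq_abs, abs_of_nonneg ht.1]; exact ht.2
        _ = ‖y‖ := one_mul _
        _ < ρ := hynorm
    have hmemU : ∀ t : ℝ, t ∈ Icc (0:ℝ) 1 → x₀ + t • y ∈ U := by
      intro t ht
      apply hball
      rw [Metric.mem_ball, dist_eq_norm]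
      simpa using lt_of_lt_of_le (hyr t ht) hρε
    set c : ℕ → ℝ := fun n => p n (fun _ => y) y with hcdef
    -- pointwise sum of the derivative series
    have hptsum : ∀ t : ℝ, t ∈ Icc (0:ℝ) 1 →
        HasSum (fun n => t ^ n * c n) (D (x₀ + t • y) y) := by
      intro t ht
      have hmem : t • y ∈ Metric.eball (0 : X) r := by
        rw [EMetric.mem_ball, edist_zero_right]
        exact_mod_cast lt_trans (by exact_mod_cast hyr t ht) hρr
      have h1 := hp.hasSum hmem
      have h2 : HasSum (fun n => (p n (fun _ => t • y)) y) (D (x₀ + t • y) y) :=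
        (ContinuousLinearMap.apply ℝ ℝ y).hasSum h1
      convert h2 using 2 with n
      have : (fun _ : Fin n => t • y) = fun i : Fin n => t • ((fun _ : Fin n => y) i) := rfl
      rw [this, ContinuousMultilinearMap.map_smul_univ]
      simp [hcdef, smul_smul, Finset.prod_const, mul_comm]
    -- derivative along the segment
    have hderiv : ∀ t : ℝ, t ∈ Icc (0:ℝ) 1 →
        HasDerivAt (fun s : ℝ => E (x₀ + s • y)) (D (x₀ + t • y) y) t := by
      intro t ht
      have h1 : HasDerivAt (fun s : ℝ => x₀ + s • y) y t := by
        simpa using ((hasDerivAt_id t).smul_const y).const_add x₀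
      exact (hE _ (hmemU t ht)).comp_hasDerivAt t h1
    -- continuity of the integrand
    have hcont : ContinuousOn (fun t : ℝ => D (x₀ + t • y) y) (Icc (0:ℝ) 1) := by
      apply ContinuousOn.clm_apply _ continuousOn_const
      exact hD.continuousOn.comp (by fun_prop) hmemU
    -- FTC
    have hFTC : E (x₀ + y) - E x₀ = ∫ t in (0:ℝ)..1, D (x₀ + t • y) y := by
      have := intervalIntegral.integral_eq_sub_of_hasDerivAt (a := 0) (b := 1)
        (f := fun s : ℝ => E (x₀ + s • y)) (f' := fun t : ℝ => D (x₀ + t • y) y)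
        (fun t ht => hderiv t (by rwa [Set.uIcc_of_le zero_le_one] at ht))
        ((hcont.mono (by rw [Set.uIcc_of_le zero_le_one])).intervalIntegrable)
      simp only [one_smul, zero_smul, add_zero] at this
      rw [this]
    -- interchange of sum and integral
    have hcsum : Summable fun n => |c n| := by
      have har : (‖y‖₊ : ENNReal) < p.radius := lt_of_lt_of_le (hy.trans hρr) hp.r_le
      have hsum : Summable fun n => ‖p n‖ * ‖y‖ ^ n := by
        have := p.summable_norm_mul_pow har
        simpa [← coe_nnnorm] using this
      refine Summable.of_nonneg_of_le (fun n => abs_nonneg _) (fun n => ?_)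
        (hsum.mul_left (‖y‖))
      calc |c n| ≤ ‖p n (fun _ => y)‖ * ‖y‖ := (p n (fun _ => y)).le_opNorm y
        _ ≤ (‖p n‖ * ∏ _i : Fin n, ‖y‖) * ‖y‖ :=
            mul_le_mul_of_nonneg_right ((p n).le_opNorm _) (norm_nonneg _)
        _ = ‖y‖ * (‖p n‖ * ‖y‖ ^ n) := by simp [Finset.prod_const]; ring
    have hint : ∀ n : ℕ, IntegrableOn (fun t : ℝ => t ^ n * c n) (Ioc (0:ℝ) 1) := by
      intro n
      exact (Continuous.integrableOn_Ioc (by continuity))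
    have hintnorm : Summable fun n => ∫ t in Ioc (0:ℝ) 1, ‖t ^ n * c n‖ := by
      refine Summable.of_nonneg_of_le
        (fun n => integral_nonneg (fun t => norm_nonneg _)) (fun n => ?_) hcsum
      calc ∫ t in Ioc (0:ℝ) 1, ‖t ^ n * c n‖ ≤ ∫ _t in Ioc (0:ℝ) 1, |c n| := by
            apply setIntegral_mono_on (hint n).norm (integrableOn_const (by simp))
              measurableSet_Ioc
            intro t ht
            rw [norm_mul, Real.norm_eq_abs, Real.norm_eq_abs, abs_pow,
              abs_of_nonneg ht.1.le]
            calc t ^ n * |c n| ≤ 1 * |c n| := by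
                  apply mul_le_mul_of_nonneg_right _ (abs_nonneg _)
                  exact pow_le_one₀ ht.1.le ht.2
              _ = |c n| := one_mul _
        _ = |c n| := by simp
    have hkey := MeasureTheory.hasSum_integral_of_summable_integral_norm
      (μ := volume.restrict (Ioc (0:ℝ) 1)) hint hintnorm
    -- identify the integral of the tsum
    have htsum_eq : ∫ t in Ioc (0:ℝ) 1, (∑' n, t ^ n * c n)
        = ∫ t in Ioc (0:ℝ) 1, D (x₀ + t • y) y := by
      apply setIntegral_congr_fun measurableSet_Ioc
      intro t ht
      exact (hptsum t ⟨ht.1.le, ht.2⟩).tsum_eq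
    -- identify each term's integral
    have hterm : ∀ n : ℕ, (∫ t in Ioc (0:ℝ) 1, t ^ n * c n) = ((n : ℝ) + 1)⁻¹ * c n := by
      intro n
      rw [← intervalIntegral.integral_of_le zero_le_one]
      rw [intervalIntegral.integral_mul_const, integral_pow]
      simp [div_eq_mul_inv]
    rw [funext hterm, htsum_eq, ← intervalIntegral.integral_of_le zero_le_one,
      ← hFTC] at hkey
    -- assemble: shift index by 1
    have happly : ∀ n : ℕ, q (n + 1) (fun _ => y) = ((n : ℝ) + 1)⁻¹ * c n := by
      intro n
      rw [hqs n]
      rfl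
    have h0 : q 0 (fun _ => y) = E x₀ := rfl
    have hkey' : HasSum (fun n => q (n + 1) (fun _ => y)) (E (x₀ + y) - E x₀) := by
      simpa [happly] using hkey
    have := (hasSum_nat_add_iff (f := fun n => q n (fun _ => y)) 1).1 hkey'
    simpa [h0] using this

/-- Analytic gradient maps have analytic potentials: if `M : U → Y` is a real analytic
gradient map for a Fréchet-differentiable function `E : U → ℝ` via a continuous linear
embedding `ι : Y → X*`, then `E` is real analytic on `U`. -/
theorem analytic_gradient_map_has_analytic_potential
    {X Y : Type*} [NormedAddCommGroup X] [NormedSpace ℝ X] [CompleteSpace X]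
    [NormedAddCommGroup Y] [NormedSpace ℝ Y] [CompleteSpace Y]
    (ι : Y →L[ℝ] StrongDual ℝ X) (hι : Function.Injective ι)
    (U : Set X) (hU : IsOpen U)
    (E : X → ℝ) (hEdiff : ∀ x ∈ U, DifferentiableAt ℝ E x)
    (M : X → Y) (hMan : AnalyticOnNhd ℝ M U)
    (hgrad : ∀ x ∈ U, ∀ v : X, fderiv ℝ E x v = ι (M x) v) :
    AnalyticOnNhd ℝ E U := by
  have hD : AnalyticOnNhd ℝ (fun x => ι (M x)) U :=
    fun x hx => (ι.analyticAt (M x)).comp (hMan x hx)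
  have hE : ∀ x ∈ U, HasFDerivAt E (ι (M x)) x := by
    intro x hx
    have h1 : fderiv ℝ E x = ι (M x) := ContinuousLinearMap.ext (hgrad x hx)
    exact h1 ▸ (hEdiff x hx).hasFDerivAt
  exact analytic_of_hasFDerivAt_analytic hU hE hD
end
end
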